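/- arXiv:1608.08690 — 5 statements merged into one kernel-verified Lean document; each statement's English description precedes it below -/
import Mathlib

section
/- Let p be a prime and n an integer with p ∣ n. Then (1/|SL₂(ℤ/pℤ)|) · Σ_{w ∈ SL₂(ℤ/pℤ)} c_p(d(w) − n) = −1/(p + 1), where d(w) denotes the bottom-right entry of w (lifted to ℤ). -/
/-- The Ramanujan sum `c_q(m) = Σ_{a ∈ (ℤ/qℤ)ˣ} e^{2πi a m / q}`. -/
noncomputable def ramanujanSum (q : ℕ) [NeZero q] (m : ℤ) : ℂ :=
  ∑ a : (ZMod q)ˣ,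
    Complex.exp (2 * Real.pi * Complex.I * (((a : ZMod q).val : ℂ) * (m : ℂ)) / (q : ℂ))

/-- The bottom-right entry of `w ∈ SL₂(ℤ/qℤ)`, lifted to `ℤ`. -/
def dEntry {q : ℕ} (w : Matrix.SpecialLinearGroup (Fin 2) (ZMod q)) : ℤ :=
  ((w : Matrix (Fin 2) (Fin 2) (ZMod q)) 1 1).val

open Complex Finset Matrix

lemma aux_sum_val {p : ℕ} [NeZero p] (ζ : ℂ) :
    ∑ x : ZMod p, ζ ^ (x.val) = ∑ i ∈ Finset.range p, ζ ^ i := by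
  refine Finset.sum_nbij' (fun x => x.val) (fun i => (i : ZMod p)) ?_ ?_ ?_ ?_ ?_
  · intro x _; exact Finset.mem_range.mpr (ZMod.val_lt x)
  · intro i _; exact Finset.mem_univ _
  · intro x _; simp [ZMod.natCast_val, ZMod.cast_id]
  · intro i hi; exact ZMod.val_cast_of_lt (Finset.mem_range.mp hi)
  · intro x _; rfl

lemma ramanujanSum_prime (p : ℕ) [hp : Fact p.Prime] (m : ℤ) :
    ramanujanSum p m = if (m : ZMod p) = 0 then (p : ℂ) - 1 else -1 := by
  have hp2 : 2 ≤ p := hp.out.two_le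
  have hpc : (p : ℂ) ≠ 0 := Nat.cast_ne_zero.mpr hp.out.ne_zero
  set ζ : ℂ := Complex.exp (2 * Real.pi * Complex.I * m / p) with hζ
  have hterm : ∀ a : (ZMod p)ˣ,
      Complex.exp (2 * Real.pi * Complex.I * (((a : ZMod p).val : ℂ) * (m : ℂ)) / (p : ℂ))
        = ζ ^ ((a : ZMod p).val) := by
    intro a
    rw [hζ, ← Complex.exp_nat_mul]
    ring_nf
  rw [ramanujanSum]
  simp_rw [hterm]
  by_cases hm : (m : ZMod p) = 0
  · obtain ⟨k, hk⟩ := (ZMod.intCast_zmod_eq_zero_iff_dvd m p).mp hm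
    have hζ1 : ζ = 1 := by
      rw [hζ, hk]
      push_cast
      rw [show 2 * (Real.pi : ℂ) * Complex.I * ((p : ℂ) * (k : ℂ)) / (p : ℂ)
          = (k : ℂ) * (2 * Real.pi * Complex.I) by field_simp]
      exact Complex.exp_int_mul_two_pi_mul_I k
    simp only [hm, if_pos]
    rw [hζ1]
    simp only [one_pow, Finset.sum_const, Finset.card_univ, nsmul_eq_mul, mul_one]
    rw [ZMod.card_units_eq_totient, Nat.totient_prime hp.out]
    have h1 : (1 : ℕ) ≤ p := by omega
    push_cast [Nat.cast_sub h1]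
    ring
  · have hζ1 : ζ ≠ 1 := by
      intro h
      rw [hζ, Complex.exp_eq_one_iff] at h
      obtain ⟨k, hk⟩ := h
      have hπ : (Real.pi : ℂ) ≠ 0 := by exact_mod_cast Real.pi_ne_zero
      have hmc : (m : ℂ) = (k : ℂ) * p := by
        rw [div_eq_iff hpc] at hk
        have h2 : (m : ℂ) * (2 * Real.pi * Complex.I)
            = ((k : ℂ) * p) * (2 * Real.pi * Complex.I) := by
          linear_combination hk
        exact mul_right_cancel₀
          (mul_ne_zero (mul_ne_zero two_ne_zero hπ) Complex.I_ne_zero) h2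
      have hm' : m = k * p := by exact_mod_cast hmc
      exact hm (by rw [hm']; push_cast; simp)
    have hζp : ζ ^ p = 1 := by
      rw [hζ, ← Complex.exp_nat_mul]
      rw [show (p : ℂ) * (2 * Real.pi * Complex.I * m / p)
          = (m : ℂ) * (2 * Real.pi * Complex.I) by field_simp]
      exact Complex.exp_int_mul_two_pi_mul_I m
    have hsum_all : ∑ x : ZMod p, ζ ^ (x.val) = 0 := by
      rw [aux_sum_val, geom_sum_eq hζ1, hζp]
      simp
    have hunits : ∑ a : (ZMod p)ˣ, ζ ^ ((a : ZMod p).val)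
        = ∑ x ∈ Finset.univ.erase (0 : ZMod p), ζ ^ (x.val) := by
      refine Finset.sum_bij (fun a _ => (a : ZMod p)) ?_ ?_ ?_ ?_
      · intro a _
        exact Finset.mem_erase.mpr ⟨a.ne_zero, Finset.mem_univ _⟩
      · intro a _ b _ h
        exact Units.ext h
      · intro x hx
        exact ⟨Units.mk0 x (Finset.mem_erase.mp hx).1, Finset.mem_univ _, rfl⟩
      · intro a _; rfl
    rw [hunits]
    have h2 := Finset.sum_erase_add Finset.univ (fun x : ZMod p => ζ ^ (x.val))
      (Finset.mem_univ (0 : ZMod p))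
    rw [hsum_all] at h2
    simp only [ZMod.val_zero, pow_zero] at h2
    rw [if_neg hm]
    linear_combination h2

/-- Fiber of `w ↦ w 1 1` over `0` has `p(p-1)` elements. -/
lemma card_fiber_zero (p : ℕ) [hp : Fact p.Prime] :
    Fintype.card {w : Matrix.SpecialLinearGroup (Fin 2) (ZMod p) //
        (w : Matrix (Fin 2) (Fin 2) (ZMod p)) 1 1 = 0} = p * (p - 1) := by
  have e : {w : Matrix.SpecialLinearGroup (Fin 2) (ZMod p) //
        (w : Matrix (Fin 2) (Fin 2) (ZMod p)) 1 1 = 0}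
      ≃ (ZMod p) × {c : ZMod p // c ≠ 0} := by
    refine
      { toFun := fun w => ⟨(w.1 : Matrix (Fin 2) (Fin 2) (ZMod p)) 0 0,
          ⟨(w.1 : Matrix (Fin 2) (Fin 2) (ZMod p)) 1 0, ?_⟩⟩
        invFun := fun x => ⟨⟨!![x.1, -(x.2.1)⁻¹; x.2.1, 0], ?_⟩, ?_⟩
        left_inv := ?_
        right_inv := ?_ }
    · have hdet := w.1.2
      rw [Matrix.det_fin_two] at hdet
      rw [w.2] at hdet
      intro h
      rw [h] at hdet
      simp at hdet
    · rw [Matrix.det_fin_two_of]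
      field_simp
      simp [div_self x.2.2]
    · simp
    · rintro ⟨⟨M, hM⟩, h11⟩
      have h11' : M 1 1 = 0 := h11
      have hdet := hM
      rw [Matrix.det_fin_two, h11'] at hdet
      have hd2 : M 0 1 * M 1 0 = -1 := by linear_combination -hdet
      have h10 : M 1 0 ≠ 0 := by
        intro h; rw [h] at hd2; simp at hd2
      refine Subtype.ext (Subtype.ext ?_)
      ext i j
      fin_cases i <;> fin_cases j <;>
        simp only [Matrix.SpecialLinearGroup.coe_mk, Matrix.cons_val_zero,
          Matrix.cons_val_one, Matrix.head_cons, Matrix.head_fin_const,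
          Matrix.of_apply, Matrix.cons_val', Matrix.empty_val',
          Matrix.cons_val_fin_one]
      · rfl
      · simp only [Fin.mk_one, Fin.zero_eta, Matrix.cons_val_one, Matrix.cons_val_zero, Matrix.head_cons]
        field_simp
        linear_combination -hd2
      · rfl
      · exact h11'.symm
    · rintro ⟨a, ⟨c, hc⟩⟩
      simp
  rw [Fintype.card_congr e, Fintype.card_prod, ZMod.card]
  congr 1
  rw [Fintype.card_subtype_compl, ZMod.card, Fintype.card_subtype_eq]

/-- Fiber of `w ↦ w 1 1` over `d ≠ 0` has `p²` elements. -/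
lemma card_fiber_ne (p : ℕ) [hp : Fact p.Prime] (d : ZMod p) (hd : d ≠ 0) :
    Fintype.card {w : Matrix.SpecialLinearGroup (Fin 2) (ZMod p) //
        (w : Matrix (Fin 2) (Fin 2) (ZMod p)) 1 1 = d} = p * p := by
  have e : {w : Matrix.SpecialLinearGroup (Fin 2) (ZMod p) //
        (w : Matrix (Fin 2) (Fin 2) (ZMod p)) 1 1 = d}
      ≃ (ZMod p) × (ZMod p) := by
    refine
      { toFun := fun w => ⟨(w.1 : Matrix (Fin 2) (Fin 2) (ZMod p)) 0 1,
          (w.1 : Matrix (Fin 2) (Fin 2) (ZMod p)) 1 0⟩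
        invFun := fun x => ⟨⟨!![(1 + x.1 * x.2) * d⁻¹, x.1; x.2, d], ?_⟩, ?_⟩
        left_inv := ?_
        right_inv := ?_ }
    · rw [Matrix.det_fin_two_of]
      field_simp
      ring
    · simp
    · rintro ⟨⟨M, hM⟩, h11⟩
      have h11' : M 1 1 = d := h11
      have hdet := hM
      rw [Matrix.det_fin_two, h11'] at hdet
      refine Subtype.ext (Subtype.ext ?_)
      ext i j
      fin_cases i <;> fin_cases j <;>
        simp only [Matrix.SpecialLinearGroup.coe_mk, Matrix.cons_val_zero,
          Matrix.cons_val_one, Matrix.head_cons, Matrix.head_fin_const,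
          Matrix.of_apply, Matrix.cons_val', Matrix.empty_val',
          Matrix.cons_val_fin_one]
      · simp only [Fin.mk_one, Fin.zero_eta, Matrix.cons_val_one, Matrix.cons_val_zero, Matrix.head_cons]
        field_simp
        linear_combination -hdet
      · rfl
      · rfl
      · exact h11'.symm
    · rintro ⟨b, c⟩
      simp
  rw [Fintype.card_congr e, Fintype.card_prod, ZMod.card]

theorem stmt0 (p : ℕ) [Fact p.Prime] (n : ℤ) (hn : (p : ℤ) ∣ n) :
    (1 / (Fintype.card (Matrix.SpecialLinearGroup (Fin 2) (ZMod p)) : ℂ)) *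
      ∑ w : Matrix.SpecialLinearGroup (Fin 2) (ZMod p), ramanujanSum p (dEntry w - n)
    = -1 / ((p : ℂ) + 1) := by
  classical
  have hp : p.Prime := Fact.out
  have hp2 : 2 ≤ p := hp.two_le
  set G := Matrix.SpecialLinearGroup (Fin 2) (ZMod p) with hG
  set g : G → ZMod p := fun w => (w : Matrix (Fin 2) (Fin 2) (ZMod p)) 1 1 with hg
  have hcast : ∀ w : G, ((dEntry w - n : ℤ) : ZMod p) = g w := by
    intro w
    have hn0 : ((n : ℤ) : ZMod p) = 0 := (ZMod.intCast_zmod_eq_zero_iff_dvd n p).mpr hn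
    rw [Int.cast_sub, hn0, sub_zero, dEntry]
    push_cast
    simp [ZMod.natCast_val, ZMod.cast_id]
    rfl
  set F : ZMod p → ℂ := fun d => if d = 0 then (p : ℂ) - 1 else -1 with hF
  have hfib : ∀ d : ZMod p,
      (Finset.univ.filter (fun w : G => g w = d)).card
        = if d = 0 then p * (p - 1) else p * p := by
    intro d
    rw [← Fintype.card_subtype]
    by_cases hd : d = 0
    · subst hd
      rw [if_pos rfl]
      exact card_fiber_zero p
    · rw [if_neg hd]
      exact card_fiber_ne p d hd
  have hsum_if : ∀ (A B : ℂ),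
      ∑ d : ZMod p, (if d = 0 then A else B) = A + (↑(p - 1) : ℂ) * B := by
    intro A B
    rw [← Finset.sum_erase_add _ _ (Finset.mem_univ (0 : ZMod p))]
    rw [if_pos rfl]
    rw [Finset.sum_congr rfl (fun x hx => if_neg (Finset.mem_erase.mp hx).1)]
    rw [Finset.sum_const, Finset.card_erase_of_mem (Finset.mem_univ _), Finset.card_univ,
      ZMod.card, nsmul_eq_mul]
    ring
  have hS : ∑ w : G, ramanujanSum p (dEntry w - n)
      = (↑(p * (p - 1)) : ℂ) * ((p : ℂ) - 1) + (↑(p - 1) : ℂ) * ((↑(p * p) : ℂ) * (-1)) := by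
    have h1 : ∀ w : G, ramanujanSum p (dEntry w - n) = F (g w) := by
      intro w
      rw [ramanujanSum_prime, hcast w, hF]
    rw [Finset.sum_congr rfl (fun w _ => h1 w)]
    rw [← Finset.sum_fiberwise' Finset.univ g F]
    have h2 : ∀ d : ZMod p,
        ∑ _w ∈ Finset.univ.filter (fun w : G => g w = d), F d
          = if d = 0 then (↑(p * (p - 1)) : ℂ) * ((p : ℂ) - 1)
            else (↑(p * p) : ℂ) * (-1) := by
      intro d
      rw [Finset.sum_const, hfib d, nsmul_eq_mul]
      by_cases hd : d = 0 <;> simp [hd, hF]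
    rw [Finset.sum_congr rfl (fun d _ => h2 d)]
    exact hsum_if _ _
  have hcard : (Fintype.card G : ℂ) = (↑(p * (p - 1)) : ℂ) + (↑(p - 1) : ℂ) * (↑(p * p) : ℂ) := by
    have h3 : Fintype.card G
        = ∑ d : ZMod p, (Finset.univ.filter (fun w : G => g w = d)).card := by
      rw [← Finset.card_univ]
      exact Finset.card_eq_sum_card_fiberwise (fun _ _ => Finset.mem_univ _)
    have h4 : (Fintype.card G : ℂ)
        = ∑ d : ZMod p, ((Finset.univ.filter (fun w : G => g w = d)).card : ℂ) := by
      rw [h3]; push_cast; rfl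
    rw [h4]
    have h5 : ∀ d : ZMod p,
        ((Finset.univ.filter (fun w : G => g w = d)).card : ℂ)
          = if d = 0 then (↑(p * (p - 1)) : ℂ) else (↑(p * p) : ℂ) := by
      intro d
      rw [hfib d]
      by_cases hd : d = 0 <;> simp [hd]
    rw [Finset.sum_congr rfl (fun d _ => h5 d)]
    exact hsum_if _ _
  rw [hS, hcard]
  have hP1 : ((p : ℂ) - 1) = (↑(p - 1) : ℂ) := by
    push_cast [Nat.cast_sub (by omega : 1 ≤ p)]
    ring
  have hpm1 : (↑(p - 1) : ℕ) ≠ 0 := by omega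
  have hc1 : (↑(p - 1) : ℂ) ≠ 0 := Nat.cast_ne_zero.mpr hpm1
  have hc2 : (p : ℂ) ≠ 0 := Nat.cast_ne_zero.mpr hp.ne_zero
  have hc3 : (p : ℂ) + 1 ≠ 0 := by
    have : ((p + 1 : ℕ) : ℂ) ≠ 0 := Nat.cast_ne_zero.mpr (Nat.succ_ne_zero p)
    push_cast at this
    exact this
  push_cast [Nat.cast_sub (by omega : 1 ≤ p)]
  have hden : (p : ℂ) * ((p : ℂ) - 1) + ((p : ℂ) - 1) * ((p : ℂ) * (p : ℂ)) ≠ 0 := by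
    have : (p : ℂ) * ((p : ℂ) - 1) + ((p : ℂ) - 1) * ((p : ℂ) * (p : ℂ))
        = (p : ℂ) * ((p : ℂ) - 1) * ((p : ℂ) + 1) := by ring
    rw [this]
    exact mul_ne_zero (mul_ne_zero hc2 (by push_cast [Nat.cast_sub (by omega : 1 ≤ p)] at hc1; exact hc1)) hc3
  field_simp
  have h' : (-1 + (p:ℂ)^2) ≠ 0 := by
    rw [show (-1 + (p:ℂ)^2) = ((p:ℂ)-1)*((p:ℂ)+1) by ring]
    exact mul_ne_zero (by push_cast [Nat.cast_sub (by omega : 1 ≤ p)] at hc1; exact hc1) hc3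
  linear_combination (-1:ℂ) * mul_inv_cancel₀ h'
end

section
/- Let p be a prime, t ≥ 2 an integer, and n any integer. Then Σ_{w ∈ SL₂(ℤ/p^tℤ)} c_{p^t}(d(w) − n) = 0, where d(w) denotes the bottom-right entry of w (lifted to ℤ). -/
namespace Stmt2Aux

private lemma zeta_pow_congr {q : ℕ} {ζ : ℂ} (hζ : ζ ^ q = 1) {a b : ℕ}
    (h : a % q = b % q) : ζ ^ a = ζ ^ b := by
  conv_lhs => rw [← Nat.div_add_mod a q]
  conv_rhs => rw [← Nat.div_add_mod b q]
  rw [pow_add, pow_add, pow_mul, pow_mul, hζ, one_pow, one_pow, h]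

private lemma psi_add {q : ℕ} [NeZero q] {ζ : ℂ} (hζ : ζ ^ q = 1) (x y : ZMod q) :
    ζ ^ (x + y).val = ζ ^ x.val * ζ ^ y.val := by
  rw [← pow_add]
  exact zeta_pow_congr hζ (by rw [ZMod.val_add, Nat.mod_mod_of_dvd _ dvd_rfl])

private lemma psi_mul {q : ℕ} [NeZero q] {ζ : ℂ} (hζ : ζ ^ q = 1) (x y : ZMod q) :
    ζ ^ (x * y).val = (ζ ^ x.val) ^ y.val := by
  rw [← pow_mul]
  exact zeta_pow_congr hζ (by rw [ZMod.val_mul, Nat.mod_mod_of_dvd _ dvd_rfl])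

private lemma geom_zero {q : ℕ} [NeZero q] {η : ℂ} (h1 : η ^ q = 1) (h2 : η ≠ 1) :
    ∑ x : ZMod q, η ^ x.val = 0 := by
  obtain ⟨m, rfl⟩ : ∃ m, q = m + 1 := ⟨q - 1, by have := NeZero.ne q; omega⟩
  have h : ∑ x : ZMod (m + 1), η ^ x.val = ∑ i ∈ Finset.range (m + 1), η ^ i :=
    Fin.sum_univ_eq_sum_range (fun i => η ^ i) (m + 1)
  rw [h, geom_sum_eq h2, h1, sub_self, zero_div]

private lemma char_sum {q : ℕ} [NeZero q] {ζ : ℂ} (hζ : IsPrimitiveRoot ζ q) {b : ZMod q}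
    (hb : b ≠ 0) : ∑ x : ZMod q, ζ ^ (b * x).val = 0 := by
  have hζq : ζ ^ q = 1 := hζ.pow_eq_one
  have h : ∀ x ∈ Finset.univ, ζ ^ (b * x).val = (ζ ^ b.val) ^ (x : ZMod q).val :=
    fun x _ => psi_mul hζq b x
  rw [Finset.sum_congr rfl h]
  refine geom_zero ?_ ?_
  · rw [← pow_mul, mul_comm, pow_mul, hζq, one_pow]
  · intro h1
    apply hb
    rw [← ZMod.val_eq_zero]
    exact Nat.eq_zero_of_dvd_of_lt ((hζ.pow_eq_one_iff_dvd _).mp h1) (ZMod.val_lt b)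

private lemma exp_eq_zeta {q : ℕ} [NeZero q] (m : ℤ) :
    Complex.exp (2 * (Real.pi : ℂ) * Complex.I * (m : ℂ) / (q : ℂ))
      = Complex.exp (2 * (Real.pi : ℂ) * Complex.I / (q : ℂ)) ^ ((m : ZMod q)).val := by
  have hq : (q : ℂ) ≠ 0 := Nat.cast_ne_zero.mpr (NeZero.ne q)
  have hd : ((q : ℤ)) ∣ m - ((m : ZMod q)).val := by
    refine (ZMod.intCast_zmod_eq_zero_iff_dvd _ q).mp ?_
    push_cast
    simp [ZMod.natCast_val, ZMod.cast_id]
  obtain ⟨k, hk⟩ := hd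
  have hm : (m : ℂ) = (((m : ZMod q)).val : ℂ) + (q : ℂ) * (k : ℂ) := by
    have h2 : m = (((m : ZMod q)).val : ℤ) + (q : ℤ) * k := by omega
    exact_mod_cast congrArg (fun z : ℤ => (z : ℂ)) h2
  rw [hm, show 2 * (Real.pi : ℂ) * Complex.I * ((((m : ZMod q)).val : ℂ) + (q : ℂ) * k) / q
      = ((((m : ZMod q)).val : ℕ) : ℂ) * (2 * (Real.pi : ℂ) * Complex.I / q)
        + (k : ℂ) * (2 * (Real.pi : ℂ) * Complex.I) from by field_simp,
    Complex.exp_add, Complex.exp_int_mul_two_pi_mul_I, mul_one, Complex.exp_nat_mul]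

private lemma units_sum_zero (p : ℕ) [hp : Fact p.Prime] (t : ℕ) (ht : 2 ≤ t)
    {ζ : ℂ} (hζ : IsPrimitiveRoot ζ (p ^ t)) :
    ∑ d : (ZMod (p ^ t))ˣ, ζ ^ ((d : ZMod (p ^ t))).val = 0 := by
  classical
  haveI : NeZero (p ^ t) := ⟨pow_ne_zero t hp.out.ne_zero⟩
  have hζq : ζ ^ (p ^ t) = 1 := hζ.pow_eq_one
  set c : ZMod (p ^ t) := ((p ^ (t - 1) : ℕ) : ZMod (p ^ t)) with hc
  have hcval : c.val = p ^ (t - 1) := by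
    rw [hc, ZMod.val_natCast]
    exact Nat.mod_eq_of_lt (Nat.pow_lt_pow_right hp.out.one_lt (by omega))
  have hpc : p ∣ c.val := by rw [hcval]; exact dvd_pow_self p (by omega)
  have hunit : ∀ x : ZMod (p ^ t), IsUnit x ↔ ¬ p ∣ x.val := by
    intro x
    have hx : ((x.val : ℕ) : ZMod (p ^ t)) = x := by simp [ZMod.natCast_val, ZMod.cast_id]
    conv_lhs => rw [← hx]
    rw [ZMod.isUnit_iff_coprime, Nat.coprime_pow_right_iff (by omega), Nat.coprime_comm,
      Nat.Prime.coprime_iff_not_dvd hp.out]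
  have hshift : ∀ x : ZMod (p ^ t), IsUnit (x + c) ↔ IsUnit x := by
    intro x
    rw [hunit, hunit, ZMod.val_add,
      Nat.dvd_mod_iff (dvd_pow_self p (by omega : t ≠ 0)), Nat.add_comm,
      Nat.dvd_add_right hpc]
  have hne : ζ ^ c.val ≠ 1 := by
    rw [hcval]
    intro hd
    rw [hζ.pow_eq_one_iff_dvd] at hd
    have h1 : p ^ t ≤ p ^ (t - 1) := Nat.le_of_dvd (pow_pos hp.out.pos _) hd
    have h2 : p ^ (t - 1) < p ^ t := Nat.pow_lt_pow_right hp.out.one_lt (by omega)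
    omega
  have hconv : ∑ d : (ZMod (p ^ t))ˣ, ζ ^ ((d : ZMod (p ^ t))).val
      = ∑ x : ZMod (p ^ t), (if IsUnit x then ζ ^ x.val else 0) := by
    rw [← Finset.sum_filter]
    refine Finset.sum_bij (fun d _ => (d : ZMod (p ^ t))) ?_ ?_ ?_ ?_
    · intro d _; simp [Finset.mem_filter, d.isUnit]
    · intro d1 _ d2 _ h; exact Units.ext h
    · intro x hx
      rw [Finset.mem_filter] at hx
      exact ⟨hx.2.unit, Finset.mem_univ _, hx.2.unit_spec⟩
    · intro d _; rfl
  set V := ∑ x : ZMod (p ^ t), (if IsUnit x then ζ ^ x.val else 0) with hV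
  have htrans : V = V * ζ ^ c.val := by
    calc V = ∑ x : ZMod (p ^ t), (if IsUnit (x + c) then ζ ^ (x + c).val else 0) := by
          rw [hV]
          exact (Fintype.sum_bijective (· + c) (Equiv.addRight c).bijective
            (fun x : ZMod (p ^ t) => if IsUnit (x + c) then ζ ^ (x + c).val else 0)
            (fun x : ZMod (p ^ t) => if IsUnit x then ζ ^ x.val else 0)
            (fun x => rfl)).symm
      _ = ∑ x : ZMod (p ^ t), (if IsUnit x then ζ ^ x.val * ζ ^ c.val else 0) := by
          refine Finset.sum_congr rfl fun x _ => ?_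
          by_cases h : IsUnit x
          · rw [if_pos ((hshift x).mpr h), if_pos h, psi_add hζq]
          · rw [if_neg (fun hh => h ((hshift x).mp hh)), if_neg h]
      _ = V * ζ ^ c.val := by
          rw [hV, Finset.sum_mul]
          exact Finset.sum_congr rfl fun x _ => by rw [ite_mul, zero_mul]
  have hz : V * (1 - ζ ^ c.val) = 0 := by rw [mul_sub, mul_one, ← htrans, sub_self]
  rw [hconv]
  rcases mul_eq_zero.mp hz with h | h
  · exact h
  · exact absurd (sub_eq_zero.mp h).symm hne

private lemma sl2_sum (p : ℕ) [hp : Fact p.Prime] (t : ℕ) (ht : 2 ≤ t)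
    {ζ : ℂ} (hζ : IsPrimitiveRoot ζ (p ^ t)) (u : (ZMod (p ^ t))ˣ) :
    ∑ w : Matrix.SpecialLinearGroup (Fin 2) (ZMod (p ^ t)),
      ζ ^ (((u : ZMod (p ^ t)) * (w : Matrix (Fin 2) (Fin 2) (ZMod (p ^ t))) 1 1).val) = 0 := by
  classical
  haveI : NeZero (p ^ t) := ⟨pow_ne_zero t hp.out.ne_zero⟩
  have hζq : ζ ^ (p ^ t) = 1 := hζ.pow_eq_one
  have hq0 : ((p ^ t : ℕ) : ℂ) ≠ 0 := Nat.cast_ne_zero.mpr (NeZero.ne _)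
  set f : Matrix.SpecialLinearGroup (Fin 2) (ZMod (p ^ t)) → ℂ :=
    fun w => ζ ^ (((u : ZMod (p ^ t)) * (w : Matrix (Fin 2) (Fin 2) (ZMod (p ^ t))) 1 1).val)
    with hf
  let T : ZMod (p ^ t) → Matrix.SpecialLinearGroup (Fin 2) (ZMod (p ^ t)) :=
    fun x => ⟨!![1, x; 0, 1], by simp [Matrix.det_fin_two_of]⟩
  have hT : ∀ (x : ZMod (p ^ t)) (w : Matrix.SpecialLinearGroup (Fin 2) (ZMod (p ^ t))),
      ((w * T x : Matrix.SpecialLinearGroup (Fin 2) (ZMod (p ^ t)))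
          : Matrix (Fin 2) (Fin 2) (ZMod (p ^ t))) 1 1
        = (w : Matrix (Fin 2) (Fin 2) (ZMod (p ^ t))) 1 0 * x
          + (w : Matrix (Fin 2) (Fin 2) (ZMod (p ^ t))) 1 1 := by
    intro x w
    show ((w : Matrix (Fin 2) (Fin 2) (ZMod (p ^ t))) * !![1, x; 0, 1]) 1 1 = _
    simp [T, Matrix.SpecialLinearGroup.coe_mul, Matrix.mul_apply, Fin.sum_univ_two]
  have hterm : ∀ (w : Matrix.SpecialLinearGroup (Fin 2) (ZMod (p ^ t))) (x : ZMod (p ^ t)),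
      f (w * T x) = f w * ζ ^ ((((u : ZMod (p ^ t))
        * (w : Matrix (Fin 2) (Fin 2) (ZMod (p ^ t))) 1 0) * x).val) := by
    intro w x
    rw [hf]
    simp only
    rw [hT, show (u : ZMod (p ^ t)) * ((w : Matrix (Fin 2) (Fin 2) (ZMod (p ^ t))) 1 0 * x
        + (w : Matrix (Fin 2) (Fin 2) (ZMod (p ^ t))) 1 1)
      = (u : ZMod (p ^ t)) * (w : Matrix (Fin 2) (Fin 2) (ZMod (p ^ t))) 1 1
        + ((u : ZMod (p ^ t)) * (w : Matrix (Fin 2) (Fin 2) (ZMod (p ^ t))) 1 0) * x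
      from by ring, psi_add hζq]
  have hcount : ∀ b : ZMod (p ^ t),
      ∑ x : ZMod (p ^ t), ζ ^ ((b * x).val) = if b = 0 then ((p ^ t : ℕ) : ℂ) else 0 := by
    intro b
    by_cases hb : b = 0
    · subst hb
      simp [ZMod.card]
    · rw [if_neg hb]
      exact char_sum hζ hb
  have key : ((p ^ t : ℕ) : ℂ) * ∑ w : Matrix.SpecialLinearGroup (Fin 2) (ZMod (p ^ t)), f w
      = ((p ^ t : ℕ) : ℂ) * ∑ w : Matrix.SpecialLinearGroup (Fin 2) (ZMod (p ^ t)),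
          (if (w : Matrix (Fin 2) (Fin 2) (ZMod (p ^ t))) 1 0 = 0 then f w else 0) := by
    calc ((p ^ t : ℕ) : ℂ) * ∑ w : Matrix.SpecialLinearGroup (Fin 2) (ZMod (p ^ t)), f w = ∑ _x : ZMod (p ^ t), ∑ w : Matrix.SpecialLinearGroup (Fin 2) (ZMod (p ^ t)), f w := by
          rw [Finset.sum_const, Finset.card_univ, ZMod.card, nsmul_eq_mul]
      _ = ∑ x : ZMod (p ^ t), ∑ w : Matrix.SpecialLinearGroup (Fin 2) (ZMod (p ^ t)), f (w * T x) := by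
          refine Finset.sum_congr rfl fun x _ => ?_
          exact (Fintype.sum_bijective (· * T x) (Group.mulRight_bijective (T x))
            (fun w => f (w * T x)) f (fun w => rfl)).symm
      _ = ∑ w : Matrix.SpecialLinearGroup (Fin 2) (ZMod (p ^ t)), ∑ x : ZMod (p ^ t), f (w * T x) := Finset.sum_comm
      _ = ∑ w : Matrix.SpecialLinearGroup (Fin 2) (ZMod (p ^ t)), f w * ∑ x : ZMod (p ^ t), ζ ^ ((((u : ZMod (p ^ t))
            * (w : Matrix (Fin 2) (Fin 2) (ZMod (p ^ t))) 1 0) * x).val) := by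
          refine Finset.sum_congr rfl fun w _ => ?_
          rw [Finset.mul_sum]
          exact Finset.sum_congr rfl fun x _ => hterm w x
      _ = ∑ w : Matrix.SpecialLinearGroup (Fin 2) (ZMod (p ^ t)), f w * (if (u : ZMod (p ^ t))
            * (w : Matrix (Fin 2) (Fin 2) (ZMod (p ^ t))) 1 0 = 0
            then ((p ^ t : ℕ) : ℂ) else 0) := by
          refine Finset.sum_congr rfl fun w _ => ?_
          rw [hcount]
      _ = ((p ^ t : ℕ) : ℂ) * ∑ w : Matrix.SpecialLinearGroup (Fin 2) (ZMod (p ^ t)),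
            (if (w : Matrix (Fin 2) (Fin 2) (ZMod (p ^ t))) 1 0 = 0 then f w else 0) := by
          rw [Finset.mul_sum]
          refine Finset.sum_congr rfl fun w _ => ?_
          by_cases hw : (w : Matrix (Fin 2) (Fin 2) (ZMod (p ^ t))) 1 0 = 0
          · rw [if_pos hw, if_pos (show (u : ZMod (p ^ t))
              * (w : Matrix (Fin 2) (Fin 2) (ZMod (p ^ t))) 1 0 = 0 from by
                rw [hw, mul_zero])]
            ring
          · rw [if_neg hw, if_neg (show ¬ (u : ZMod (p ^ t))
              * (w : Matrix (Fin 2) (Fin 2) (ZMod (p ^ t))) 1 0 = 0 from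
                fun h => hw ((Units.mul_right_eq_zero u).mp h))]
            ring
  have hS : ∑ w : Matrix.SpecialLinearGroup (Fin 2) (ZMod (p ^ t)), f w = ∑ w : Matrix.SpecialLinearGroup (Fin 2) (ZMod (p ^ t)),
      (if (w : Matrix (Fin 2) (Fin 2) (ZMod (p ^ t))) 1 0 = 0 then f w else 0) :=
    mul_left_cancel₀ hq0 key
  have hB : ∑ w : Matrix.SpecialLinearGroup (Fin 2) (ZMod (p ^ t)), (if (w : Matrix (Fin 2) (Fin 2) (ZMod (p ^ t))) 1 0 = 0 then f w else 0)
      = ∑ z : (ZMod (p ^ t))ˣ × ZMod (p ^ t),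
          ζ ^ (((u : ZMod (p ^ t)) * (z.1 : ZMod (p ^ t))).val) := by
    rw [← Finset.sum_filter]
    refine (Finset.sum_bij
      (fun (z : (ZMod (p ^ t))ˣ × ZMod (p ^ t)) (_ : z ∈ Finset.univ) =>
        (⟨!![((z.1⁻¹ : (ZMod (p ^ t))ˣ) : ZMod (p ^ t)), z.2; 0, (z.1 : ZMod (p ^ t))], by
          simp [Matrix.det_fin_two_of]⟩
          : Matrix.SpecialLinearGroup (Fin 2) (ZMod (p ^ t))))
      ?_ ?_ ?_ ?_).symm
    · intro z _
      exact Finset.mem_filter.mpr ⟨Finset.mem_univ _, by simp⟩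
    · intro z1 _ z2 _ h
      have h' := congrArg (fun w : Matrix.SpecialLinearGroup (Fin 2) (ZMod (p ^ t)) =>
        (w : Matrix (Fin 2) (Fin 2) (ZMod (p ^ t)))) h
      have e1 : (z1.1 : ZMod (p ^ t)) = (z2.1 : ZMod (p ^ t)) := by
        have h11 := congrFun (congrFun h' 1) 1
        simpa using h11
      have e2 : z1.2 = z2.2 := by
        have h01 := congrFun (congrFun h' 0) 1
        simpa using h01
      exact Prod.ext (Units.ext e1) e2
    · intro w hw
      replace hw := Finset.mem_filter.mp hw
      have hdet : (w : Matrix (Fin 2) (Fin 2) (ZMod (p ^ t))) 0 0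
          * (w : Matrix (Fin 2) (Fin 2) (ZMod (p ^ t))) 1 1 = 1 := by
        have hd := w.prop
        rw [Matrix.det_fin_two] at hd
        simpa [hw.2] using hd
      refine ⟨(⟨(w : Matrix (Fin 2) (Fin 2) (ZMod (p ^ t))) 1 1,
          (w : Matrix (Fin 2) (Fin 2) (ZMod (p ^ t))) 0 0,
          (mul_comm _ _).trans hdet, hdet⟩,
          (w : Matrix (Fin 2) (Fin 2) (ZMod (p ^ t))) 0 1), Finset.mem_univ _, ?_⟩
      apply Subtype.ext
      ext i j
      fin_cases i <;> fin_cases j <;> simp [Units.inv_mk, hw.2]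
    · intro z _
      simp [hf]
  have hC : ∑ z : (ZMod (p ^ t))ˣ × ZMod (p ^ t),
      ζ ^ (((u : ZMod (p ^ t)) * (z.1 : ZMod (p ^ t))).val)
      = ((p ^ t : ℕ) : ℂ) * ∑ d : (ZMod (p ^ t))ˣ, ζ ^ ((d : ZMod (p ^ t))).val := by
    rw [Fintype.sum_prod_type]
    calc ∑ d : (ZMod (p ^ t))ˣ, ∑ _b : ZMod (p ^ t),
          ζ ^ (((u : ZMod (p ^ t)) * (d : ZMod (p ^ t))).val)
        = ∑ d : (ZMod (p ^ t))ˣ,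
            ((p ^ t : ℕ) : ℂ) * ζ ^ (((u : ZMod (p ^ t)) * (d : ZMod (p ^ t))).val) := by
          refine Finset.sum_congr rfl fun d _ => ?_
          rw [Finset.sum_const, Finset.card_univ, ZMod.card, nsmul_eq_mul]
      _ = ((p ^ t : ℕ) : ℂ) * ∑ d : (ZMod (p ^ t))ˣ,
            ζ ^ (((u : ZMod (p ^ t)) * (d : ZMod (p ^ t))).val) := by
          rw [Finset.mul_sum]
      _ = ((p ^ t : ℕ) : ℂ) * ∑ d : (ZMod (p ^ t))ˣ, ζ ^ ((d : ZMod (p ^ t))).val := by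
          congr 1
          have hbij := Fintype.sum_bijective (fun d => u * d) (Group.mulLeft_bijective u)
            (fun d : (ZMod (p ^ t))ˣ => ζ ^ (((u * d : (ZMod (p ^ t))ˣ) : ZMod (p ^ t))).val)
            (fun d : (ZMod (p ^ t))ˣ => ζ ^ ((d : ZMod (p ^ t))).val) (fun d => rfl)
          simpa [Units.val_mul] using hbij
  rw [hS, hB, hC, units_sum_zero p t ht hζ, mul_zero]

end Stmt2Aux

theorem stmt2 (p : ℕ) [Fact p.Prime] (t : ℕ) (ht : 2 ≤ t) (n : ℤ) :
    ∑ w : Matrix.SpecialLinearGroup (Fin 2) (ZMod (p ^ t)),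
      ramanujanSum (p ^ t) (dEntry w - n) = 0 := by
  classical
  have hq0 : (p ^ t : ℕ) ≠ 0 := NeZero.ne _
  set ζ : ℂ := Complex.exp (2 * (Real.pi : ℂ) * Complex.I / ((p ^ t : ℕ) : ℂ)) with hzeta
  have hζ : IsPrimitiveRoot ζ (p ^ t) := Complex.isPrimitiveRoot_exp _ hq0
  have hζq : ζ ^ (p ^ t) = 1 := hζ.pow_eq_one
  have hram : ∀ w : Matrix.SpecialLinearGroup (Fin 2) (ZMod (p ^ t)),
      ramanujanSum (p ^ t) (dEntry w - n)
      = ∑ a : (ZMod (p ^ t))ˣ, ζ ^ (((a : ZMod (p ^ t))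
          * ((w : Matrix (Fin 2) (Fin 2) (ZMod (p ^ t))) 1 1 - (n : ZMod (p ^ t)))).val) := by
    intro w
    unfold ramanujanSum
    refine Finset.sum_congr rfl fun a _ => ?_
    rw [show 2 * (Real.pi : ℂ) * Complex.I
        * (((a : ZMod (p ^ t)).val : ℂ) * ((dEntry w - n : ℤ) : ℂ)) / ((p ^ t : ℕ) : ℂ)
      = 2 * (Real.pi : ℂ) * Complex.I
        * (((((a : ZMod (p ^ t)).val : ℤ) * (dEntry w - n) : ℤ) : ℂ)) / ((p ^ t : ℕ) : ℂ)
      from by push_cast; ring]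
    rw [Stmt2Aux.exp_eq_zeta, ← hzeta]
    congr 2
    push_cast
    simp [dEntry, ZMod.natCast_val, ZMod.cast_id]
  rw [Finset.sum_congr rfl fun w _ => hram w]
  rw [Finset.sum_comm]
  refine Finset.sum_eq_zero fun a _ => ?_
  have hsplit : ∀ w : Matrix.SpecialLinearGroup (Fin 2) (ZMod (p ^ t)),
      ζ ^ (((a : ZMod (p ^ t))
          * ((w : Matrix (Fin 2) (Fin 2) (ZMod (p ^ t))) 1 1 - (n : ZMod (p ^ t)))).val)
      = ζ ^ (((a : ZMod (p ^ t)) * (w : Matrix (Fin 2) (Fin 2) (ZMod (p ^ t))) 1 1).val)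
        * ζ ^ (((a : ZMod (p ^ t)) * (-(n : ZMod (p ^ t)))).val) := by
    intro w
    rw [show (a : ZMod (p ^ t))
        * ((w : Matrix (Fin 2) (Fin 2) (ZMod (p ^ t))) 1 1 - (n : ZMod (p ^ t)))
      = (a : ZMod (p ^ t)) * (w : Matrix (Fin 2) (Fin 2) (ZMod (p ^ t))) 1 1
        + (a : ZMod (p ^ t)) * (-(n : ZMod (p ^ t))) from by ring,
      Stmt2Aux.psi_add hζq]
  rw [Finset.sum_congr rfl fun w _ => hsplit w, ← Finset.sum_mul,
    Stmt2Aux.sl2_sum p t ht hζ a, zero_mul]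
end

section
/- Let p be a prime, t ≥ 2 an integer, γ ∈ SL₂(ℤ/p^{t−1}ℤ), and let d₀ ∈ ℤ/p^tℤ be any element whose reduction modulo p^{t−1} equals the bottom-right entry of γ. Then the number of elements w ∈ SL₂(ℤ/p^tℤ) such that w reduces to γ modulo p^{t−1} and the bottom-right entry of w equals d₀ is exactly p². -/
namespace Stmt6Aux

/-- `eps p t x = p^(t-1) * x` viewed in `ZMod (p^t)`. -/
def eps (p t : ℕ) (x : ZMod p) : ZMod (p ^ t) :=
  ((p ^ (t - 1) * x.val : ℕ) : ZMod (p ^ t))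

variable {p t : ℕ} [hp : Fact p.Prime]

lemma eps_nat (ht : 2 ≤ t) (m : ℕ) :
    ((p ^ (t - 1) * m : ℕ) : ZMod (p ^ t)) = eps p t (m : ZMod p) := by
  unfold eps
  rw [ZMod.val_natCast]
  apply (ZMod.natCast_eq_natCast_iff _ _ _).mpr
  have h : p ^ (t - 1) * p = p ^ t := by
    rw [← pow_succ]; congr 1; omega
  rw [← h]
  exact Nat.ModEq.mul_left' _ (Nat.mod_modEq m p).symm

lemma val_cast_self (x : ZMod p) : ((x.val : ℕ) : ZMod p) = x :=
  ZMod.natCast_rightInverse x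

lemma eps_add (ht : 2 ≤ t) (x y : ZMod p) :
    eps p t (x + y) = eps p t x + eps p t y := by
  have h1 : eps p t x + eps p t y = ((p ^ (t - 1) * (x.val + y.val) : ℕ) : ZMod (p ^ t)) := by
    unfold eps; push_cast; ring
  rw [h1, eps_nat ht]
  congr 1
  push_cast [val_cast_self]
  ring

lemma eps_zero : eps p t 0 = 0 := by
  unfold eps
  simp [ZMod.val_zero]

lemma eps_neg (ht : 2 ≤ t) (x : ZMod p) : eps p t (-x) = -eps p t x := by
  have h := eps_add ht x (-x)
  rw [add_neg_cancel, eps_zero] at h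
  exact eq_neg_of_add_eq_zero_right h.symm

lemma eps_sub (ht : 2 ≤ t) (x y : ZMod p) :
    eps p t (x - y) = eps p t x - eps p t y := by
  rw [sub_eq_add_neg, eps_add ht, eps_neg ht, sub_eq_add_neg]

lemma mul_eps (ht : 2 ≤ t) (u : ZMod (p ^ t)) (x : ZMod p) :
    u * eps p t x
      = eps p t (ZMod.castHom (dvd_pow_self p (by omega : t ≠ 0)) (ZMod p) u * x) := by
  have hu : ((u.val : ℕ) : ZMod (p ^ t)) = u := ZMod.natCast_rightInverse u
  have h1 : u * eps p t x = ((p ^ (t - 1) * (u.val * x.val) : ℕ) : ZMod (p ^ t)) := by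
    conv_lhs => rw [← hu]
    unfold eps; push_cast; ring
  rw [h1, eps_nat ht]
  congr 1
  push_cast [val_cast_self]
  rw [ZMod.castHom_apply, ZMod.natCast_val]

lemma eps_mul_eps (ht : 2 ≤ t) (x y : ZMod p) : eps p t x * eps p t y = 0 := by
  unfold eps
  rw [← Nat.cast_mul]
  rw [ZMod.natCast_eq_zero_iff]
  calc p ^ t ∣ p ^ (t - 1) * p ^ (t - 1) := by
        rw [← pow_add]; exact pow_dvd_pow p (by omega)
    _ ∣ _ := by
        apply mul_dvd_mul <;> exact Dvd.intro _ rfl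

lemma eps_inj (ht : 2 ≤ t) : Function.Injective (eps p t) := by
  intro x y h
  unfold eps at h
  rw [ZMod.natCast_eq_natCast_iff] at h
  have hpt : p ^ (t - 1) * p = p ^ t := by rw [← pow_succ]; congr 1; omega
  rw [← hpt] at h
  have hc := Nat.ModEq.mul_left_cancel'
    (pow_ne_zero _ hp.out.ne_zero) h
  have hx : x.val < p := ZMod.val_lt x
  have hy : y.val < p := ZMod.val_lt y
  have : x.val = y.val := by
    unfold Nat.ModEq at hc
    rwa [Nat.mod_eq_of_lt hx, Nat.mod_eq_of_lt hy] at hc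
  calc x = ((x.val : ℕ) : ZMod p) := (val_cast_self x).symm
    _ = ((y.val : ℕ) : ZMod p) := by rw [this]
    _ = y := val_cast_self y

lemma castHom_eps (ht : 2 ≤ t) (x : ZMod p) :
    ZMod.castHom (pow_dvd_pow p (Nat.sub_le t 1)) (ZMod (p ^ (t - 1))) (eps p t x) = 0 := by
  unfold eps
  rw [map_natCast, ZMod.natCast_eq_zero_iff]
  exact Dvd.intro _ rfl

lemma castHom_p_eps (ht : 2 ≤ t) (x : ZMod p) :
    ZMod.castHom (dvd_pow_self p (by omega : t ≠ 0)) (ZMod p) (eps p t x) = 0 := by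
  unfold eps
  rw [map_natCast, ZMod.natCast_eq_zero_iff]
  exact dvd_mul_of_dvd_left (dvd_pow_self p (by omega)) _

lemma exists_eps (ht : 2 ≤ t) (u : ZMod (p ^ t))
    (h : ZMod.castHom (pow_dvd_pow p (Nat.sub_le t 1)) (ZMod (p ^ (t - 1))) u = 0) :
    ∃ x : ZMod p, u = eps p t x := by
  rw [ZMod.castHom_apply, ← ZMod.natCast_val, ZMod.natCast_eq_zero_iff] at h
  obtain ⟨k, hk⟩ := h
  refine ⟨(k : ZMod p), ?_⟩
  rw [← eps_nat ht, ← hk, ZMod.natCast_rightInverse]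

lemma exists_eps' (ht : 2 ≤ t) (u v : ZMod (p ^ t))
    (h : ZMod.castHom (pow_dvd_pow p (Nat.sub_le t 1)) (ZMod (p ^ (t - 1))) u
       = ZMod.castHom (pow_dvd_pow p (Nat.sub_le t 1)) (ZMod (p ^ (t - 1))) v) :
    ∃ x : ZMod p, v = u + eps p t x := by
  obtain ⟨x, hx⟩ := exists_eps ht (v - u) (by rw [map_sub, h, sub_self])
  exact ⟨x, by rw [← hx]; ring⟩

lemma card_linear {K : Type*} [Field K] [Fintype K] (a b c e : K) (h : a ≠ 0 ∨ b ≠ 0) :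
    Nat.card {v : K × K × K // a * v.1 - b * v.2.1 - c * v.2.2 + e = 0}
      = Fintype.card K ^ 2 := by
  have key : ∀ E : {v : K × K × K // a * v.1 - b * v.2.1 - c * v.2.2 + e = 0} ≃ K × K,
      Nat.card {v : K × K × K // a * v.1 - b * v.2.1 - c * v.2.2 + e = 0}
        = Fintype.card K ^ 2 := by
    intro E
    rw [Nat.card_congr E, Nat.card_prod, Nat.card_eq_fintype_card, sq]
  rcases h with ha | hb
  · exact key
      { toFun := fun v => (v.1.2.1, v.1.2.2)
        invFun := fun w => ⟨(a⁻¹ * (b * w.1 + c * w.2 - e), w.1, w.2), by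
          rw [mul_inv_cancel_left₀ ha]; ring⟩
        left_inv := fun v => by
          obtain ⟨⟨x, y, z⟩, hv⟩ := v
          have hax : a * x = b * y + c * z - e := by linear_combination hv
          exact Subtype.ext (by simp only; rw [← hax, inv_mul_cancel_left₀ ha])
        right_inv := fun w => rfl }
  · exact key
      { toFun := fun v => (v.1.1, v.1.2.2)
        invFun := fun w => ⟨(w.1, b⁻¹ * (a * w.1 - c * w.2 + e), w.2), by
          rw [mul_inv_cancel_left₀ hb]; ring⟩
        left_inv := fun v => by
          obtain ⟨⟨x, y, z⟩, hv⟩ := v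
          have hby : b * y = a * x - c * z + e := by linear_combination -hv
          exact Subtype.ext (by simp only; rw [← hby, inv_mul_cancel_left₀ hb])
        right_inv := fun w => rfl }

end Stmt6Aux

open Stmt6Aux in

theorem stmt6 (p : ℕ) [Fact p.Prime] (t : ℕ) (ht : 2 ≤ t)
    (γ : Matrix.SpecialLinearGroup (Fin 2) (ZMod (p ^ (t - 1))))
    (d₀ : ZMod (p ^ t))
    (hd₀ : ZMod.castHom (pow_dvd_pow p (Nat.sub_le t 1)) (ZMod (p ^ (t - 1))) d₀
        = (γ : Matrix (Fin 2) (Fin 2) (ZMod (p ^ (t - 1)))) 1 1) :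
    Nat.card {w : Matrix.SpecialLinearGroup (Fin 2) (ZMod (p ^ t)) //
        Matrix.SpecialLinearGroup.map
            (ZMod.castHom (pow_dvd_pow p (Nat.sub_le t 1)) (ZMod (p ^ (t - 1)))) w = γ ∧
        (w : Matrix (Fin 2) (Fin 2) (ZMod (p ^ t))) 1 1 = d₀} = p ^ 2 := by
  classical
  have hp : p.Prime := Fact.out
  haveI : Fact (1 < p) := ⟨hp.one_lt⟩
  set F := ZMod.castHom (pow_dvd_pow p (Nat.sub_le t 1)) (ZMod (p ^ (t - 1))) with hFdef
  set δ := ZMod.castHom (dvd_pow_self p (by omega : t ≠ 0)) (ZMod p) with hδdef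
  set G := (γ : Matrix (Fin 2) (Fin 2) (ZMod (p ^ (t - 1)))) with hGdef
  set a₀ : ZMod (p ^ t) := ((G 0 0).val : ZMod (p ^ t)) with ha₀
  set b₀ : ZMod (p ^ t) := ((G 0 1).val : ZMod (p ^ t)) with hb₀
  set c₀ : ZMod (p ^ t) := ((G 1 0).val : ZMod (p ^ t)) with hc₀
  have hFa : F a₀ = G 0 0 := by rw [ha₀, map_natCast]; exact ZMod.natCast_rightInverse _
  have hFb : F b₀ = G 0 1 := by rw [hb₀, map_natCast]; exact ZMod.natCast_rightInverse _
  have hFc : F c₀ = G 1 0 := by rw [hc₀, map_natCast]; exact ZMod.natCast_rightInverse _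
  have hdetγ : G 0 0 * G 1 1 - G 0 1 * G 1 0 = 1 := by
    have h := γ.2
    rw [Matrix.det_fin_two] at h
    exact h
  have hdet1 : F (a₀ * d₀ - b₀ * c₀) = 1 := by
    rw [map_sub, map_mul, map_mul, hFa, hFb, hFc, hd₀]
    exact hdetγ
  obtain ⟨e, he⟩ := Stmt6Aux.exists_eps' ht 1 (a₀ * d₀ - b₀ * c₀) (by rw [map_one, hdet1])
  have hδdet : δ a₀ * δ d₀ - δ b₀ * δ c₀ = 1 := by
    have h := congrArg δ he
    rw [map_sub, map_mul, map_mul, map_add, map_one,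
      Stmt6Aux.castHom_p_eps ht, add_zero] at h
    exact h
  have hcd : δ d₀ ≠ 0 ∨ δ c₀ ≠ 0 := by
    by_contra hcon
    push_neg at hcon
    rw [hcon.1, hcon.2, mul_zero, mul_zero, sub_zero] at hδdet
    exact zero_ne_one hδdet
  have key : ∀ x y z : ZMod p,
      (a₀ + eps p t x) * d₀ - (b₀ + eps p t y) * (c₀ + eps p t z)
        = 1 + eps p t (δ d₀ * x - δ c₀ * y - δ b₀ * z + e) := by
    intro x y z
    have h1 : d₀ * eps p t x = eps p t (δ d₀ * x) := Stmt6Aux.mul_eps ht d₀ x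
    have h2 : c₀ * eps p t y = eps p t (δ c₀ * y) := Stmt6Aux.mul_eps ht c₀ y
    have h3 : b₀ * eps p t z = eps p t (δ b₀ * z) := Stmt6Aux.mul_eps ht b₀ z
    have h4 : eps p t y * eps p t z = 0 := Stmt6Aux.eps_mul_eps ht y z
    have h5 : eps p t (δ d₀ * x - δ c₀ * y - δ b₀ * z + e)
        = eps p t (δ d₀ * x) - eps p t (δ c₀ * y) - eps p t (δ b₀ * z) + eps p t e := by
      rw [Stmt6Aux.eps_add ht, Stmt6Aux.eps_sub ht, Stmt6Aux.eps_sub ht]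
    calc (a₀ + eps p t x) * d₀ - (b₀ + eps p t y) * (c₀ + eps p t z)
        = (a₀ * d₀ - b₀ * c₀) + (d₀ * eps p t x - c₀ * eps p t y - b₀ * eps p t z
            - eps p t y * eps p t z) := by ring
      _ = 1 + eps p t (δ d₀ * x - δ c₀ * y - δ b₀ * z + e) := by
          rw [he, h4, h1, h2, h3, h5]; ring
  let f : {v : ZMod p × ZMod p × ZMod p //
        δ d₀ * v.1 - δ c₀ * v.2.1 - δ b₀ * v.2.2 + e = 0} →
      {w : Matrix.SpecialLinearGroup (Fin 2) (ZMod (p ^ t)) //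
        Matrix.SpecialLinearGroup.map F w = γ ∧
        (w : Matrix (Fin 2) (Fin 2) (ZMod (p ^ t))) 1 1 = d₀} :=
    fun v =>
      ⟨⟨!![a₀ + eps p t v.1.1, b₀ + eps p t v.1.2.1; c₀ + eps p t v.1.2.2, d₀], by
          rw [Matrix.det_fin_two_of, key v.1.1 v.1.2.1 v.1.2.2, v.2,
            Stmt6Aux.eps_zero, add_zero]⟩, by
        constructor
        · apply Subtype.ext
          show Matrix.map _ F = G
          ext i j
          fin_cases i <;> fin_cases j <;>
            simp [Matrix.map_apply, map_add, Stmt6Aux.castHom_eps ht, hFa, hFb, hFc, hd₀] <;>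
              exact Stmt6Aux.castHom_eps ht _
        · show (!![_, _; _, d₀] : Matrix (Fin 2) (Fin 2) (ZMod (p ^ t))) 1 1 = d₀
          simp⟩
  have hinj : Function.Injective f := by
    rintro ⟨⟨x, y, z⟩, hv⟩ ⟨⟨x', y', z'⟩, hv'⟩ hff
    have hm := congrArg (fun w => ((w.1 : Matrix (Fin 2) (Fin 2) (ZMod (p ^ t))))) hff
    simp only [f] at hm
    have h00 := congrFun (congrFun hm 0) 0
    have h01 := congrFun (congrFun hm 0) 1
    have h10 := congrFun (congrFun hm 1) 0
    simp only [Matrix.of_apply, Matrix.cons_val', Matrix.cons_val_zero, Matrix.cons_val_one,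
      Matrix.head_cons, Matrix.empty_val', Matrix.cons_val_fin_one,
      Matrix.head_fin_const] at h00 h01 h10
    have hx := Stmt6Aux.eps_inj ht (add_left_cancel h00)
    have hy := Stmt6Aux.eps_inj ht (add_left_cancel h01)
    have hz := Stmt6Aux.eps_inj ht (add_left_cancel h10)
    simp only [Subtype.mk.injEq, Prod.mk.injEq]
    exact ⟨hx, hy, hz⟩
  have hsurj : Function.Surjective f := by
    rintro ⟨⟨M, hMdet⟩, hmap, h11⟩
    have h11' : M 1 1 = d₀ := h11
    have hent : ∀ i j, F (M i j) = G i j := by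
      intro i j
      have h := congrArg
        (fun g : Matrix.SpecialLinearGroup (Fin 2) (ZMod (p ^ (t - 1))) =>
          (g : Matrix (Fin 2) (Fin 2) (ZMod (p ^ (t - 1)))) i j) hmap
      exact h
    obtain ⟨x, hx⟩ := Stmt6Aux.exists_eps' ht a₀ (M 0 0) (by rw [hFa, ← hent 0 0])
    obtain ⟨y, hy⟩ := Stmt6Aux.exists_eps' ht b₀ (M 0 1) (by rw [hFb, ← hent 0 1])
    obtain ⟨z, hz⟩ := Stmt6Aux.exists_eps' ht c₀ (M 1 0) (by rw [hFc, ← hent 1 0])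
    have hM : M = !![a₀ + eps p t x, b₀ + eps p t y; c₀ + eps p t z, d₀] := by
      conv_lhs => rw [Matrix.eta_fin_two M]
      rw [hx, hy, hz, h11']
    have hL : δ d₀ * x - δ c₀ * y - δ b₀ * z + e = 0 := by
      have hdet := hMdet
      rw [hM, Matrix.det_fin_two_of, key x y z] at hdet
      have h0 : eps p t (δ d₀ * x - δ c₀ * y - δ b₀ * z + e) = 0 := by
        linear_combination hdet
      apply Stmt6Aux.eps_inj ht
      rw [h0, Stmt6Aux.eps_zero]
    refine ⟨⟨(x, y, z), hL⟩, ?_⟩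
    apply Subtype.ext
    apply Subtype.ext
    exact hM.symm
  have hcard := Nat.card_eq_of_bijective f ⟨hinj, hsurj⟩
  rw [← hcard]
  have hlin := Stmt6Aux.card_linear (δ d₀) (δ c₀) (δ b₀) e hcd
  rw [ZMod.card] at hlin
  exact hlin
end

section
/- Define 𝔊(n) = (π²/6) · φ(n)/n for positive integers n, where φ is Euler's totient function. Then for every real number s > 0, lim_{N→∞} (s/N^s) · Σ_{n=1}^{N} n^{s−1} · 𝔊(n) = 1; that is, Σ_{n=1}^{N} n^{s−1}𝔊(n) is asymptotic to N^s/s as N → ∞. -/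
open Filter Real Finset ArithmeticFunction Topology
open scoped ArithmeticFunction.Moebius


-- Bernoulli step inequalities
lemma step_U1 {s k : ℝ} (hs : 1 ≤ s) (hk : 1 ≤ k) :
    s * k ^ (s - 1) ≤ (k + 1) ^ s - k ^ s := by
  have hk0 : (0:ℝ) < k := by linarith
  have h := one_add_mul_self_le_rpow_one_add (s := 1/k) (by have h0 := one_div_nonneg.mpr (le_trans zero_le_one hk); linarith) hs
  have h2 : k ^ s * (1 + s * (1/k)) ≤ k ^ s * (1 + 1/k) ^ s :=
    mul_le_mul_of_nonneg_left h (rpow_nonneg hk0.le s)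
  rw [← Real.mul_rpow hk0.le (by positivity)] at h2
  have e1 : k * (1 + 1/k) = k + 1 := by field_simp
  rw [e1] at h2
  have e2 : k ^ s * (1 + s * (1/k)) = k ^ s + s * k ^ (s - 1) := by
    rw [Real.rpow_sub hk0, rpow_one]; field_simp
  linarith [e2 ▸ h2]

lemma step_L1 {s k : ℝ} (hs : 1 ≤ s) (hk : 1 ≤ k) :
    k ^ s - (k - 1) ^ s ≤ s * k ^ (s - 1) := by
  have hk0 : (0:ℝ) < k := by linarith
  have h := one_add_mul_self_le_rpow_one_add (s := -(1/k)) (by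
    rw [neg_le_neg_iff]; exact (div_le_one hk0).mpr hk) hs
  have h2 : k ^ s * (1 + s * -(1/k)) ≤ k ^ s * (1 + -(1/k)) ^ s :=
    mul_le_mul_of_nonneg_left h (rpow_nonneg hk0.le s)
  rw [← Real.mul_rpow hk0.le (by
    have : (1:ℝ)/k ≤ 1 := (div_le_one hk0).mpr hk
    linarith)] at h2
  have e1 : k * (1 + -(1/k)) = k - 1 := by field_simp; ring
  rw [e1] at h2
  have e2 : k ^ s * (1 + s * -(1/k)) = k ^ s - s * k ^ (s - 1) := by
    rw [Real.rpow_sub hk0, rpow_one]; field_simp; ring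
  linarith [e2 ▸ h2]

lemma step_U2 {s k : ℝ} (hs0 : 0 ≤ s) (hs : s ≤ 1) (hk : 1 ≤ k) :
    s * k ^ (s - 1) ≤ k ^ s - (k - 1) ^ s := by
  have hk0 : (0:ℝ) < k := by linarith
  have h := rpow_one_add_le_one_add_mul_self (s := -(1/k)) (by
    rw [neg_le_neg_iff]; exact (div_le_one hk0).mpr hk) hs0 hs
  have h2 : k ^ s * (1 + -(1/k)) ^ s ≤ k ^ s * (1 + s * -(1/k)) :=
    mul_le_mul_of_nonneg_left h (rpow_nonneg hk0.le s)
  rw [← Real.mul_rpow hk0.le (by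
    have : (1:ℝ)/k ≤ 1 := (div_le_one hk0).mpr hk
    linarith)] at h2
  have e1 : k * (1 + -(1/k)) = k - 1 := by field_simp; ring
  rw [e1] at h2
  have e2 : k ^ s * (1 + s * -(1/k)) = k ^ s - s * k ^ (s - 1) := by
    rw [Real.rpow_sub hk0, rpow_one]; field_simp; ring
  linarith [e2 ▸ h2]

lemma step_L2 {s k : ℝ} (hs0 : 0 ≤ s) (hs : s ≤ 1) (hk : 1 ≤ k) :
    (k + 1) ^ s - k ^ s ≤ s * k ^ (s - 1) := by
  have hk0 : (0:ℝ) < k := by linarith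
  have h := rpow_one_add_le_one_add_mul_self (s := 1/k) (by have h0 := one_div_nonneg.mpr (le_trans zero_le_one hk); linarith) hs0 hs
  have h2 : k ^ s * (1 + 1/k) ^ s ≤ k ^ s * (1 + s * (1/k)) :=
    mul_le_mul_of_nonneg_left h (rpow_nonneg hk0.le s)
  rw [← Real.mul_rpow hk0.le (by positivity)] at h2
  have e1 : k * (1 + 1/k) = k + 1 := by field_simp
  rw [e1] at h2
  have e2 : k ^ s * (1 + s * (1/k)) = k ^ s + s * k ^ (s - 1) := by
    rw [Real.rpow_sub hk0, rpow_one]; field_simp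
  linarith [e2 ▸ h2]


lemma A_sum_succ (s : ℝ) (M : ℕ) :
    s * ∑ m ∈ Icc 1 (M+1), (m:ℝ) ^ (s-1)
      = s * ∑ m ∈ Icc 1 M, (m:ℝ) ^ (s-1) + s * ((M:ℝ)+1) ^ (s-1) := by
  rw [Finset.sum_Icc_succ_top (Nat.one_le_iff_ne_zero.mpr (Nat.succ_ne_zero M)), mul_add]
  push_cast; ring

lemma A_le (s : ℝ) (hs : 0 < s) (M : ℕ) :
    s * ∑ m ∈ Icc 1 M, (m:ℝ) ^ (s-1) ≤ ((M:ℝ) + 1) ^ s := by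
  rcases le_or_gt 1 s with h1 | h1
  · have key : ∀ M : ℕ, s * ∑ m ∈ Icc 1 M, (m:ℝ) ^ (s-1) ≤ ((M:ℝ) + 1) ^ s - 1 := by
      intro M
      induction M with
      | zero => simp
      | succ M ih =>
          rw [A_sum_succ]
          have := step_U1 (k := (M:ℝ)+1) h1 (by have := Nat.cast_nonneg (α := ℝ) M; linarith)
          push_cast
          push_cast at ih this
          linarith
    linarith [key M, Real.rpow_nonneg (by positivity : (0:ℝ) ≤ (M:ℝ)+1) s]
  · have key : ∀ M : ℕ, s * ∑ m ∈ Icc 1 M, (m:ℝ) ^ (s-1) ≤ (M:ℝ) ^ s := by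
      intro M
      induction M with
      | zero => simp [Real.zero_rpow hs.ne']
      | succ M ih =>
          rw [A_sum_succ]
          have := step_U2 (k := (M:ℝ)+1) hs.le h1.le (by have := Nat.cast_nonneg (α := ℝ) M; linarith)
          push_cast
          push_cast at ih this
          have e : (M:ℝ) + 1 - 1 = (M:ℝ) := by ring
          rw [e] at this
          linarith
    refine (key M).trans (Real.rpow_le_rpow (by positivity) (by linarith) hs.le)

lemma A_ge (s : ℝ) (hs : 0 < s) (M : ℕ) :
    (M:ℝ) ^ s - 1 ≤ s * ∑ m ∈ Icc 1 M, (m:ℝ) ^ (s-1) := by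
  rcases le_or_gt 1 s with h1 | h1
  · have key : ∀ M : ℕ, (M:ℝ) ^ s ≤ s * ∑ m ∈ Icc 1 M, (m:ℝ) ^ (s-1) := by
      intro M
      induction M with
      | zero => simp [Real.zero_rpow hs.ne']
      | succ M ih =>
          rw [A_sum_succ]
          have := step_L1 (k := (M:ℝ)+1) h1 (by have := Nat.cast_nonneg (α := ℝ) M; linarith)
          push_cast
          push_cast at ih this
          have e : (M:ℝ) + 1 - 1 = (M:ℝ) := by ring
          rw [e] at this
          linarith
    linarith [key M]
  · have key : ∀ M : ℕ, ((M:ℝ) + 1) ^ s - 1 ≤ s * ∑ m ∈ Icc 1 M, (m:ℝ) ^ (s-1) := by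
      intro M
      induction M with
      | zero => simp
      | succ M ih =>
          rw [A_sum_succ]
          have := step_L2 (k := (M:ℝ)+1) hs.le h1.le (by have := Nat.cast_nonneg (α := ℝ) M; linarith)
          push_cast
          push_cast at ih this
          linarith
    have : (M:ℝ) ^ s ≤ ((M:ℝ)+1) ^ s := Real.rpow_le_rpow (by positivity) (by linarith) hs.le
    linarith [key M]

lemma totient_eq_sum (n : ℕ) (hn : 0 < n) :
    (Nat.totient n : ℝ) = ∑ p ∈ n.divisorsAntidiagonal, (μ p.1 : ℝ) * p.2 := by
  have h := (ArithmeticFunction.sum_eq_iff_sum_mul_moebius_eq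
      (R := ℝ) (f := fun n => (Nat.totient n : ℝ)) (g := fun n => (n : ℝ))).mp
    (fun n _ => by exact_mod_cast congrArg (Nat.cast : ℕ → ℝ) (Nat.sum_totient n))
  exact (h n hn).symm

lemma swap_sum (N : ℕ) (F : ℕ → ℕ → ℝ) :
    ∑ n ∈ Icc 1 N, ∑ p ∈ n.divisorsAntidiagonal, F p.1 p.2
      = ∑ d ∈ Icc 1 N, ∑ m ∈ Icc 1 (N / d), F d m := by
  rw [Finset.sum_sigma', Finset.sum_sigma']
  refine Finset.sum_nbij' (i := fun x => ⟨x.2.1, x.2.2⟩)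
    (j := fun x => ⟨x.1 * x.2, (x.1, x.2)⟩) ?_ ?_ ?_ ?_ ?_
  · rintro ⟨n, d, m⟩ hx
    simp only [Finset.mem_sigma, Finset.mem_Icc, Nat.mem_divisorsAntidiagonal] at hx ⊢
    obtain ⟨⟨h1, h2⟩, h3, h4⟩ := hx
    have hd : 0 < d := by
      by_contra h; push_neg at h; interval_cases d <;> omega
    have hm : 0 < m := by
      by_contra h; push_neg at h; interval_cases m <;> omega
    refine ⟨⟨hd, ?_⟩, hm, ?_⟩
    · calc d ≤ d * m := Nat.le_mul_of_pos_right d hm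
        _ ≤ N := by omega
    · rw [Nat.le_div_iff_mul_le hd, mul_comm]; omega
  · rintro ⟨d, m⟩ hx
    simp only [Finset.mem_sigma, Finset.mem_Icc, Nat.mem_divisorsAntidiagonal] at hx ⊢
    obtain ⟨⟨h1, h2⟩, h3, h4⟩ := hx
    rw [Nat.le_div_iff_mul_le (by omega), mul_comm] at h4
    have hdm : d * m ≠ 0 := Nat.mul_ne_zero (by omega) (by omega)
    refine ⟨⟨by omega, by omega⟩, ?_⟩
    simp [hdm]
  · rintro ⟨n, d, m⟩ hx
    simp only [Finset.mem_sigma, Nat.mem_divisorsAntidiagonal] at hx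
    obtain ⟨-, h3, -⟩ := hx
    simp [h3]
  · rintro ⟨d, m⟩ _; rfl
  · rintro ⟨n, d, m⟩ _; rfl

lemma summable_mu : Summable (fun d : ℕ => (μ d : ℝ) / (d:ℝ)^2) := by
  have h : Summable (fun d : ℕ => 1 / (d:ℝ)^2) :=
    Real.summable_one_div_nat_pow.mpr one_lt_two
  refine h.of_norm_bounded (fun d => ?_)
  have hmu : |(μ d : ℝ)| ≤ 1 := by exact_mod_cast abs_moebius_le_one (n := d)
  have he : ‖(μ d : ℝ)/(d:ℝ)^2‖ = |(μ d:ℝ)|/(d:ℝ)^2 := by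
    rw [Real.norm_eq_abs, abs_div, abs_pow, Nat.abs_cast]
  rw [he]
  gcongr


lemma tsum_mu : ∑' d : ℕ, (μ d : ℝ) / (d:ℝ)^2 = 6 / π^2 := by
  have h2 : (1:ℝ) < (2:ℂ).re := by norm_num
  have hz := LSeries_zeta_mul_Lseries_moebius (s := 2) h2
  rw [ArithmeticFunction.LSeries_zeta_eq_riemannZeta h2, riemannZeta_two] at hz
  have hL : LSeries (fun n => (μ n : ℂ)) 2 = ((∑' d : ℕ, (μ d : ℝ) / (d:ℝ)^2 : ℝ) : ℂ) := by
    rw [Complex.ofReal_tsum]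
    refine tsum_congr fun n => ?_
    rcases eq_or_ne n 0 with rfl | hn
    · simp [LSeries.term_zero]
    · rw [LSeries.term_of_ne_zero hn]
      push_cast
      rw [Complex.cpow_ofNat]
  rw [hL] at hz
  have hpi : ((π:ℝ):ℂ) ≠ 0 := Complex.ofReal_ne_zero.mpr Real.pi_ne_zero
  have hπ2 : (π:ℝ)^2 ≠ 0 := pow_ne_zero 2 Real.pi_ne_zero
  rw [eq_div_iff hπ2, mul_comm]
  have hzr : π^2/6 * (∑' d : ℕ, (μ d : ℝ) / (d:ℝ)^2) = 1 := by exact_mod_cast hz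
  linear_combination 6 * hzr


noncomputable def ff (s : ℝ) (N d : ℕ) : ℝ :=
  (μ d : ℝ) * (d:ℝ)^(s-2) * (s * ∑ m ∈ Icc 1 (N/d), (m:ℝ)^(s-1)) / (N:ℝ)^s

lemma ff_nonneg_aux (s : ℝ) (hs : 0 < s) (N d : ℕ) :
    0 ≤ s * ∑ m ∈ Icc 1 (N/d), (m:ℝ)^(s-1) := by
  apply mul_nonneg hs.le
  apply Finset.sum_nonneg
  intro m hm
  exact Real.rpow_nonneg (Nat.cast_nonneg m) _

lemma ff_zero (s : ℝ) {N d : ℕ} (h : d ∉ Icc 1 N) : ff s N d = 0 := by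
  simp only [Finset.mem_Icc, not_and_or, not_le] at h
  rcases h with h | h
  · interval_cases d
    simp [ff]
  · have : N / d = 0 := Nat.div_eq_of_lt h
    simp [ff, this]

lemma ff_bound (s : ℝ) (hs : 0 < s) (N d : ℕ) : ‖ff s N d‖ ≤ 2^s / (d:ℝ)^2 := by
  rcases eq_or_ne d 0 with rfl | hd0
  · simp [ff]
  rcases Nat.lt_or_ge N d with hNd | hNd
  · rw [ff_zero s (by simp [Finset.mem_Icc]; omega)]
    simp only [norm_zero]
    positivity
  -- now 1 ≤ d ≤ N
  have hd1 : 1 ≤ d := Nat.one_le_iff_ne_zero.mpr hd0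
  have hdR : (0:ℝ) < d := by exact_mod_cast hd1
  have hN1 : 1 ≤ N := le_trans hd1 hNd
  have hNR : (0:ℝ) < N := by exact_mod_cast hN1
  set M := N / d with hM
  have hM1 : 1 ≤ M := Nat.one_le_div_iff (by omega) |>.mpr hNd
  have hMR : (1:ℝ) ≤ (M:ℝ) := by exact_mod_cast hM1
  have hMle : (M:ℝ) * d ≤ N := by exact_mod_cast Nat.div_mul_le_self N d
  have hA : s * ∑ m ∈ Icc 1 M, (m:ℝ)^(s-1) ≤ (2*(N:ℝ)/d)^s := by
    refine (A_le s hs M).trans (Real.rpow_le_rpow (by positivity) ?_ hs.le)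
    rw [le_div_iff₀ hdR]
    nlinarith
  have hAnn := ff_nonneg_aux s hs N d
  have habs : ‖ff s N d‖ ≤ (d:ℝ)^(s-2) * (2*(N:ℝ)/d)^s / (N:ℝ)^s := by
    rw [ff, norm_div, norm_mul, norm_mul, Real.norm_eq_abs, Real.norm_eq_abs, Real.norm_eq_abs, Real.norm_eq_abs,
      abs_of_nonneg hAnn, abs_of_nonneg (Real.rpow_nonneg hdR.le _),
      abs_of_nonneg (Real.rpow_nonneg hNR.le _)]
    have hmu : |(μ d : ℝ)| ≤ 1 := by exact_mod_cast abs_moebius_le_one (n := d)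
    rw [div_le_div_iff₀ (by positivity) (by positivity)]
    have h1 : |(μ d : ℝ)| * (d:ℝ)^(s-2) * (s * ∑ m ∈ Icc 1 M, (m:ℝ)^(s-1))
        ≤ 1 * (d:ℝ)^(s-2) * (2*(N:ℝ)/d)^s := by
      apply mul_le_mul
      · exact mul_le_mul_of_nonneg_right hmu (Real.rpow_nonneg hdR.le _)
      · exact hA
      · exact hAnn
      · positivity
    calc |(μ d : ℝ)| * (d:ℝ)^(s-2) * (s * ∑ m ∈ Icc 1 M, (m:ℝ)^(s-1)) * (N:ℝ)^s
        ≤ 1 * (d:ℝ)^(s-2) * (2*(N:ℝ)/d)^s * (N:ℝ)^s :=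
          mul_le_mul_of_nonneg_right h1 (Real.rpow_nonneg hNR.le _)
      _ = (d:ℝ)^(s-2) * (2*(N:ℝ)/d)^s * (N:ℝ)^s := by ring
  refine habs.trans (le_of_eq ?_)
  rw [Real.div_rpow (by positivity) hdR.le, Real.mul_rpow (by norm_num) hNR.le,
    Real.rpow_sub hdR]
  have h2 : (d:ℝ)^(2:ℝ) = (d:ℝ)^2 := by
    rw [show ((2:ℝ)) = ((2:ℕ):ℝ) by norm_num, Real.rpow_natCast]
  rw [h2]
  have hds : (d:ℝ)^s ≠ 0 := (Real.rpow_pos_of_pos hdR s).ne'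
  have hNs : (N:ℝ)^s ≠ 0 := (Real.rpow_pos_of_pos hNR s).ne'
  field_simp

lemma ff_lim (s : ℝ) (hs : 0 < s) (d : ℕ) :
    Tendsto (fun N => ff s N d) atTop (𝓝 ((μ d : ℝ) / (d:ℝ)^2)) := by
  rcases eq_or_ne d 0 with rfl | hd0
  · simp only [ff, ArithmeticFunction.map_zero]
    simpa using tendsto_const_nhds
  have hd1 : 1 ≤ d := Nat.one_le_iff_ne_zero.mpr hd0
  have hdR : (0:ℝ) < d := by exact_mod_cast hd1
  -- u N = d^s * A(N/d) / N^s
  set u : ℕ → ℝ := fun N => (d:ℝ)^s * (s * ∑ m ∈ Icc 1 (N/d), (m:ℝ)^(s-1)) / (N:ℝ)^s with hu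
  have hfu : ∀ N, ff s N d = (μ d : ℝ) / (d:ℝ)^2 * u N := by
    intro N
    rw [ff, hu]
    have h2 : (d:ℝ)^(s-2) = (d:ℝ)^s / (d:ℝ)^2 := by
      rw [Real.rpow_sub hdR]
      congr 1
      rw [show ((2:ℝ)) = ((2:ℕ):ℝ) by norm_num, Real.rpow_natCast]
    rw [h2]
    ring
  have hu1 : Tendsto u atTop (𝓝 1) := by
    -- squeeze
    have hrpow_cont : Tendsto (fun x : ℝ => x ^ s) (𝓝 1) (𝓝 1) := by
      have := (Real.continuousAt_rpow_const 1 s (Or.inl one_ne_zero)).tendsto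
      simpa using this
    have hLBbase : Tendsto (fun N : ℕ => ((N:ℝ) - d + 1) / N) atTop (𝓝 1) := by
      have h1 : Tendsto (fun N : ℕ => 1 + (1 - (d:ℝ)) / N) atTop (𝓝 (1 + 0)) :=
        tendsto_const_nhds.add (tendsto_const_div_atTop_nhds_zero_nat _)
      rw [add_zero] at h1
      refine h1.congr' ?_
      filter_upwards [eventually_ge_atTop 1] with N hN
      have hNR : (0:ℝ) < N := by exact_mod_cast hN
      field_simp
      ring
    have hUBbase : Tendsto (fun N : ℕ => ((N:ℝ) + d) / N) atTop (𝓝 1) := by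
      have h1 : Tendsto (fun N : ℕ => 1 + (d:ℝ) / N) atTop (𝓝 (1 + 0)) :=
        tendsto_const_nhds.add (tendsto_const_div_atTop_nhds_zero_nat _)
      rw [add_zero] at h1
      refine h1.congr' ?_
      filter_upwards [eventually_ge_atTop 1] with N hN
      have hNR : (0:ℝ) < N := by exact_mod_cast hN
      field_simp
    have hLBrpow : Tendsto (fun N : ℕ => (((N:ℝ) - d + 1) / N) ^ s) atTop (𝓝 1) :=
      hrpow_cont.comp hLBbase
    have hUB : Tendsto (fun N : ℕ => (((N:ℝ) + d) / N) ^ s) atTop (𝓝 1) :=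
      hrpow_cont.comp hUBbase
    have hds : Tendsto (fun N : ℕ => (d:ℝ)^s / (N:ℝ)^s) atTop (𝓝 0) := by
      apply Tendsto.div_atTop (tendsto_const_nhds)
      exact (tendsto_rpow_atTop hs).comp tendsto_natCast_atTop_atTop
    have hLB : Tendsto (fun N : ℕ => (((N:ℝ) - d + 1) / N) ^ s - (d:ℝ)^s / (N:ℝ)^s)
        atTop (𝓝 1) := by
      simpa using hLBrpow.sub hds
    refine tendsto_of_tendsto_of_tendsto_of_le_of_le' hLB hUB ?_ ?_
    · -- lower bound eventually
      filter_upwards [eventually_ge_atTop d] with N hNd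
      have hN1 : 1 ≤ N := le_trans hd1 hNd
      have hNR : (0:ℝ) < N := by exact_mod_cast hN1
      set M := N / d with hM
      have hlow : N - d + 1 ≤ d * M := by
        have h' := Nat.lt_div_mul_add (a := N) (b := d) (Nat.lt_of_lt_of_le Nat.zero_lt_one hd1)
        have h'' : d * M = N / d * d := by rw [hM, Nat.mul_comm]
        omega
      have hlowR : (N:ℝ) - d + 1 ≤ (d:ℝ) * M := by
        have h' : ((N - d + 1 : ℕ) : ℝ) ≤ ((d * M : ℕ) : ℝ) := by exact_mod_cast hlow
        push_cast [Nat.cast_sub hNd] at h'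
        linarith
      have hbase : (0:ℝ) ≤ (N:ℝ) - d + 1 := by
        have : (d:ℝ) ≤ N := by exact_mod_cast hNd
        linarith
      have h1 : ((N:ℝ) - d + 1)^s ≤ ((d:ℝ) * M)^s := Real.rpow_le_rpow hbase hlowR hs.le
      have h2 : ((d:ℝ) * M)^s = (d:ℝ)^s * (M:ℝ)^s :=
        Real.mul_rpow hdR.le (Nat.cast_nonneg M)
      have hge := A_ge s hs M
      have hNs : (0:ℝ) < (N:ℝ)^s := Real.rpow_pos_of_pos hNR s
      have hdivN : (((N:ℝ) - d + 1) / N)^s = ((N:ℝ) - d + 1)^s / (N:ℝ)^s :=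
        Real.div_rpow hbase hNR.le s
      have step : ((N:ℝ) - d + 1)^s - (d:ℝ)^s ≤ (d:ℝ)^s * (s * ∑ m ∈ Icc 1 M, (m:ℝ)^(s-1)) := by
        have h3 := mul_le_mul_of_nonneg_left hge (Real.rpow_nonneg hdR.le s)
        nlinarith [Real.rpow_nonneg hdR.le s]
      show (((N:ℝ) - d + 1) / N)^s - (d:ℝ)^s / (N:ℝ)^s
          ≤ (d:ℝ)^s * (s * ∑ m ∈ Icc 1 M, (m:ℝ)^(s-1)) / (N:ℝ)^s
      rw [hdivN, ← sub_div]
      exact div_le_div_of_nonneg_right step hNs.le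
    · -- upper bound eventually
      filter_upwards [eventually_ge_atTop d] with N hNd
      have hN1 : 1 ≤ N := le_trans hd1 hNd
      have hNR : (0:ℝ) < N := by exact_mod_cast hN1
      set M := N / d with hM
      have hup : d * (M + 1) ≤ N + d := by
        have := Nat.div_mul_le_self N d
        rw [hM]; nlinarith [Nat.div_mul_le_self N d]
      have hupR : (d:ℝ) * ((M:ℝ) + 1) ≤ (N:ℝ) + d := by
        have h' : ((d * (M + 1) : ℕ) : ℝ) ≤ ((N + d : ℕ) : ℝ) := by exact_mod_cast hup
        push_cast at h'
        linarith
      have hle := A_le s hs M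
      have hNs : (0:ℝ) < (N:ℝ)^s := Real.rpow_pos_of_pos hNR s
      have h1 : (d:ℝ)^s * (s * ∑ m ∈ Icc 1 M, (m:ℝ)^(s-1)) ≤ ((N:ℝ) + d)^s := by
        calc (d:ℝ)^s * (s * ∑ m ∈ Icc 1 M, (m:ℝ)^(s-1))
            ≤ (d:ℝ)^s * ((M:ℝ) + 1)^s :=
              mul_le_mul_of_nonneg_left hle (Real.rpow_nonneg hdR.le s)
          _ = ((d:ℝ) * ((M:ℝ) + 1))^s := (Real.mul_rpow hdR.le (by positivity)).symm
          _ ≤ ((N:ℝ) + d)^s := Real.rpow_le_rpow (by positivity) hupR hs.le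
      show (d:ℝ)^s * (s * ∑ m ∈ Icc 1 M, (m:ℝ)^(s-1)) / (N:ℝ)^s ≤ (((N:ℝ) + d) / N)^s
      rw [Real.div_rpow (by positivity) hNR.le]
      exact div_le_div_of_nonneg_right h1 hNs.le
  have := hu1.const_mul ((μ d : ℝ) / (d:ℝ)^2)
  rw [mul_one] at this
  exact this.congr (fun N => (hfu N).symm)

theorem stmt11 (s : ℝ) (hs : 0 < s) :
    Tendsto (fun N : ℕ =>
        (s / (N : ℝ) ^ s) * ∑ n ∈ Finset.Icc 1 N,
          (n : ℝ) ^ (s - 1) * ((Real.pi ^ 2 / 6) * (Nat.totient n : ℝ) / (n : ℝ)))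
      atTop (nhds 1) := by
  have hEq : ∀ N : ℕ,
      (s / (N : ℝ) ^ s) * ∑ n ∈ Finset.Icc 1 N,
          (n : ℝ) ^ (s - 1) * ((Real.pi ^ 2 / 6) * (Nat.totient n : ℝ) / (n : ℝ))
        = (π^2/6) * ∑' d : ℕ, ff s N d := by
    intro N
    have hts : ∑' d : ℕ, ff s N d = ∑ d ∈ Icc 1 N, ff s N d :=
      tsum_eq_sum (fun d hd => ff_zero s hd)
    have hnum : ∑ n ∈ Icc 1 N, (n:ℝ)^(s-1) * ((π^2/6) * (Nat.totient n : ℝ) / n)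
        = (π^2/6) * ∑ d ∈ Icc 1 N, (μ d : ℝ) * (d:ℝ)^(s-2)
            * ∑ m ∈ Icc 1 (N/d), (m:ℝ)^(s-1) := by
      have h1 : ∑ n ∈ Icc 1 N, (n:ℝ)^(s-1) * ((π^2/6) * (Nat.totient n : ℝ) / n)
          = (π^2/6) * ∑ n ∈ Icc 1 N, ∑ p ∈ n.divisorsAntidiagonal,
              ((p.1:ℝ)*(p.2:ℝ))^(s-2) * ((μ p.1 : ℝ) * p.2) := by
        rw [Finset.mul_sum]
        refine Finset.sum_congr rfl fun n hn => ?_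
        rw [Finset.mem_Icc] at hn
        have hn0 : 0 < n := hn.1
        have hnR : (0:ℝ) < n := by exact_mod_cast hn0
        have hpow : (n:ℝ)^(s-2) = (n:ℝ)^(s-1) / n := by
          rw [show s-2 = (s-1)-1 by ring, Real.rpow_sub hnR, Real.rpow_one]
        calc (n:ℝ)^(s-1) * ((π^2/6) * (Nat.totient n : ℝ) / n)
            = (π^2/6) * ((n:ℝ)^(s-2) * (Nat.totient n : ℝ)) := by rw [hpow]; ring
          _ = (π^2/6) * ∑ p ∈ n.divisorsAntidiagonal,
                (n:ℝ)^(s-2) * ((μ p.1 : ℝ) * p.2) := by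
              rw [totient_eq_sum n hn0, Finset.mul_sum]
          _ = (π^2/6) * ∑ p ∈ n.divisorsAntidiagonal,
                ((p.1:ℝ)*(p.2:ℝ))^(s-2) * ((μ p.1 : ℝ) * p.2) := by
              congr 1
              refine Finset.sum_congr rfl fun p hp => ?_
              rw [Nat.mem_divisorsAntidiagonal] at hp
              have hcast : (n:ℝ) = (p.1:ℝ)*(p.2:ℝ) := by
                rw [← Nat.cast_mul, hp.1]
              rw [hcast]
      rw [h1, swap_sum N (fun d m => ((d:ℝ)*(m:ℝ))^(s-2) * ((μ d : ℝ) * m))]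
      congr 1
      refine Finset.sum_congr rfl fun d hd => ?_
      rw [Finset.mem_Icc] at hd
      have hdR : (0:ℝ) < d := by exact_mod_cast hd.1
      rw [Finset.mul_sum]
      refine Finset.sum_congr rfl fun m hm => ?_
      rw [Finset.mem_Icc] at hm
      have hmR : (0:ℝ) < m := by exact_mod_cast hm.1
      rw [Real.mul_rpow hdR.le hmR.le]
      have : (m:ℝ)^(s-1) = (m:ℝ)^(s-2) * m := by
        rw [show s-1 = (s-2)+1 by ring, Real.rpow_add_one hmR.ne']
      rw [this]
      ring
    rw [hnum, hts, mul_left_comm]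
    congr 1
    rw [Finset.mul_sum]
    refine Finset.sum_congr rfl fun d hd => ?_
    simp only [ff]
    ring
  have hsummable : Summable (fun d : ℕ => (2:ℝ)^s / (d:ℝ)^2) := by
    have h := Real.summable_one_div_nat_pow.mpr one_lt_two
    have := h.mul_left ((2:ℝ)^s)
    simpa [div_eq_mul_inv, one_div] using this
  have hT : Tendsto (fun N : ℕ => ∑' d : ℕ, ff s N d) atTop
      (𝓝 (∑' d : ℕ, (μ d : ℝ) / (d:ℝ)^2)) :=
    tendsto_tsum_of_dominated_convergence hsummable (ff_lim s hs)
      (Eventually.of_forall fun N d => ff_bound s hs N d)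
  rw [tsum_mu] at hT
  have final := hT.const_mul (π^2/6)
  have hone : π^2/6 * (6/π^2) = 1 := by
    have hπ : π ≠ 0 := Real.pi_ne_zero
    field_simp
  rw [hone] at final
  exact final.congr (fun N => (hEq N).symm)
end

section
/- Fix an integer A ≥ 2 and for 1 ≤ a ≤ A let M(a) be the 2×2 integer matrix with rows (0, 1) and (1, a). Then for every positive integer q, the reduction-mod-q map SL₂(ℤ) → SL₂(ℤ/qℤ), restricted to the subgroup of SL₂(ℤ) generated by {M(i)·M(j) : 1 ≤ i, j ≤ A}, is surjective onto SL₂(ℤ/qℤ). -/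
/-- The matrix `M(a) = [[0, 1], [1, a]]` over `ℤ`. -/
def M (a : ℕ) : Matrix (Fin 2) (Fin 2) ℤ := !![0, 1; 1, (a : ℤ)]

open Matrix Matrix.SpecialLinearGroup

variable {R : Type*} [CommRing R]

/-- upper shear -/
def sU (t : R) : SpecialLinearGroup (Fin 2) R :=
  ⟨!![1, t; 0, 1], by simp [Matrix.det_fin_two_of]⟩

/-- lower shear -/
def sL (t : R) : SpecialLinearGroup (Fin 2) R :=
  ⟨!![1, 0; t, 1], by simp [Matrix.det_fin_two_of]⟩

/-- rotation [[0,-1],[1,0]] -/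
def sW : SpecialLinearGroup (Fin 2) R :=
  ⟨!![0, -1; 1, 0], by simp [Matrix.det_fin_two_of]⟩

lemma sU_mul (a b : R) : sU a * sU b = sU (a + b) := by
  ext i j
  simp only [Matrix.SpecialLinearGroup.coe_mul]
  fin_cases i <;> fin_cases j <;>
    simp [sU, Matrix.mul_apply, Fin.sum_univ_two, add_comm]

lemma sL_mul (a b : R) : sL a * sL b = sL (a + b) := by
  ext i j
  simp only [Matrix.SpecialLinearGroup.coe_mul]
  fin_cases i <;> fin_cases j <;>
    simp [sL, Matrix.mul_apply, Fin.sum_univ_two]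

lemma sU_pow (n : ℕ) : (sU (1 : R)) ^ n = sU (n : R) := by
  induction n with
  | zero => ext i j; simp only [Matrix.SpecialLinearGroup.coe_pow]; fin_cases i <;> fin_cases j <;> simp [sU]
  | succ n ih => rw [pow_succ, ih, sU_mul]; norm_num

lemma sU_inv (t : R) : (sU t)⁻¹ = sU (-t) := by
  rw [inv_eq_iff_mul_eq_one, sU_mul]
  ext i j; fin_cases i <;> fin_cases j <;> simp [sU]

lemma sL_inv (t : R) : (sL t)⁻¹ = sL (-t) := by
  rw [inv_eq_iff_mul_eq_one, sL_mul]
  ext i j; fin_cases i <;> fin_cases j <;> simp [sL]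

lemma sW_eq : (sW : SpecialLinearGroup (Fin 2) R) = sU (-1) * sL 1 * sU (-1) := by
  ext i j
  simp only [Matrix.SpecialLinearGroup.coe_mul]
  fin_cases i <;> fin_cases j <;>
    simp [sU, sL, sW, Matrix.mul_apply, Fin.sum_univ_two]

section zmod
variable {q : ℕ} [NeZero q] (H : Subgroup (SpecialLinearGroup (Fin 2) (ZMod q)))
  (hU : sU (1 : ZMod q) ∈ H) (hL : sL (1 : ZMod q) ∈ H)

include hU hL

lemma sU_mem (t : ZMod q) : sU t ∈ H := by
  have : sU ((t.val : ℕ) : ZMod q) ∈ H := by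
    rw [← sU_pow]; exact pow_mem hU _
  rwa [ZMod.natCast_val, ZMod.cast_id] at this

lemma sL_mem (t : ZMod q) : sL t ∈ H := by
  have h : ∀ n : ℕ, sL ((n : ℕ) : ZMod q) ∈ H := by
    intro n
    induction n with
    | zero =>
      have : sL ((0:ℕ) : ZMod q) = 1 := by
        ext i j; fin_cases i <;> fin_cases j <;> simp [sL]
      rw [this]; exact one_mem H
    | succ n ih =>
      have := mul_mem ih hL
      rwa [sL_mul, ← Nat.cast_succ] at this
  have := h t.val
  rwa [ZMod.natCast_val, ZMod.cast_id] at this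

lemma sW_mem : (sW : SpecialLinearGroup (Fin 2) (ZMod q)) ∈ H := by
  rw [sW_eq]
  exact mul_mem (mul_mem (sU_mem H hU hL _) (sL_mem H hU hL _)) (sU_mem H hU hL _)

end zmod

section main
variable {q : ℕ} [NeZero q] (H : Subgroup (SpecialLinearGroup (Fin 2) (ZMod q)))
  (hU : sU (1 : ZMod q) ∈ H) (hL : sL (1 : ZMod q) ∈ H)

include hU hL

lemma diag_case (x : SpecialLinearGroup (Fin 2) (ZMod q)) (hc : x 1 0 = 0) : x ∈ H := by
  set a := x 0 0 with ha
  set b := x 0 1 with hb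
  set d := x 1 1 with hd
  have hdet : a * d - b * x 1 0 = 1 := by
    have := x.prop
    rw [Matrix.det_fin_two] at this
    exact this
  rw [hc] at hdet
  have had : a * d = 1 := by linear_combination hdet
  have hx : x = sU a * sL (-d) * sU a * sW * sU (d * b) := by
    ext i j
    simp only [Matrix.SpecialLinearGroup.coe_mul]
    fin_cases i <;> fin_cases j <;>
      simp [sU, sL, sW, Matrix.mul_apply, Matrix.vecMul, dotProduct,
        Fin.sum_univ_two, ← ha, ← hb, ← hd, hc] <;>
      first
      | linear_combination (-a) * had
      | linear_combination (a * d * b - b - 1) * had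
      | linear_combination had
      | linear_combination (-(d * b)) * had
  rw [hx]
  exact mul_mem (mul_mem (mul_mem (mul_mem (sU_mem H hU hL _) (sL_mem H hU hL _))
    (sU_mem H hU hL _)) (sW_mem H hU hL)) (sU_mem H hU hL _)

lemma key : ∀ (n : ℕ) (x : SpecialLinearGroup (Fin 2) (ZMod q)), (x 1 0).val = n → x ∈ H := by
  intro n
  induction n using Nat.strong_induction_on with
  | _ n ih =>
    intro x hn
    rcases Nat.eq_zero_or_pos n with h0 | hpos
    · subst h0
      exact diag_case H hU hL x ((ZMod.val_eq_zero _).mp hn)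
    · -- c ≠ 0
      set c := x 1 0 with hcdef
      set a := x 0 0 with hadef
      have hcval : c.val = n := hn
      set t : ℕ := a.val / c.val with htdef
      set r : ℕ := a.val % c.val with hrdef
      have hrlt : r < n := by
        rw [← hcval]; exact Nat.mod_lt _ (by omega)
      set y := sW * (sU (-(t : ZMod q)) * x) with hy
      have hy10 : y 1 0 = a - (t : ZMod q) * c := by
        rw [hy]; simp only [Matrix.SpecialLinearGroup.coe_mul]
        simp [hy, sW, sU, Matrix.SpecialLinearGroup.coe_mul, Matrix.mul_apply,
          Matrix.vecMul, dotProduct, Fin.sum_univ_two, ← hadef, ← hcdef]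
        ring
      have hval : (a - (t : ZMod q) * c) = (r : ZMod q) := by
        have : a.val = c.val * t + r := (Nat.div_add_mod a.val c.val).symm
        have ha' : a = ((c.val * t + r : ℕ) : ZMod q) := by
          rw [← this, ZMod.natCast_val, ZMod.cast_id]
        rw [ha']
        push_cast
        rw [ZMod.natCast_val, ZMod.cast_id]
        ring
      have hrval : (y 1 0).val = r := by
        rw [hy10, hval]
        exact ZMod.val_natCast_of_lt (lt_of_lt_of_le hrlt (le_of_lt (hcval ▸ ZMod.val_lt c)))
      have hymem : y ∈ H := ih r hrlt y hrval
      have : x = (sU (-(t : ZMod q)))⁻¹ * (sW⁻¹ * y) := by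
        rw [hy]; group
      rw [this]
      exact mul_mem (inv_mem (sU_mem H hU hL _))
        (mul_mem (inv_mem (sW_mem H hU hL)) hymem)

end main

/-- `M i * M j` as an element of `SL(2, ℤ)`. -/
def wsl (i j : ℕ) : SpecialLinearGroup (Fin 2) ℤ :=
  ⟨M i * M j, by simp [M, Matrix.det_mul, Matrix.det_fin_two_of]; ring⟩

lemma wsl_one_one_mul : sL (1 : ℤ) * wsl 1 1 = wsl 2 1 := by
  ext i j
  simp only [Matrix.SpecialLinearGroup.coe_mul]
  fin_cases i <;> fin_cases j <;>
    simp [sL, wsl, M, Matrix.mul_apply, Fin.sum_univ_two]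

lemma wsl_mul_one_one : wsl 1 1 * sU (1 : ℤ) = wsl 1 2 := by
  ext i j
  simp only [Matrix.SpecialLinearGroup.coe_mul]
  fin_cases i <;> fin_cases j <;>
    simp [sU, wsl, M, Matrix.mul_apply, Fin.sum_univ_two]

lemma map_sU (q : ℕ) :
    Matrix.SpecialLinearGroup.map (Int.castRingHom (ZMod q)) (sU (1 : ℤ)) = sU (1 : ZMod q) := by
  ext i j
  simp only [Matrix.SpecialLinearGroup.map_apply_coe]
  fin_cases i <;> fin_cases j <;> simp [sU, Matrix.SpecialLinearGroup.map]

lemma map_sL (q : ℕ) :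
    Matrix.SpecialLinearGroup.map (Int.castRingHom (ZMod q)) (sL (1 : ℤ)) = sL (1 : ZMod q) := by
  ext i j
  simp only [Matrix.SpecialLinearGroup.map_apply_coe]
  fin_cases i <;> fin_cases j <;> simp [sL, Matrix.SpecialLinearGroup.map]

theorem stmt16 (A : ℕ) (hA : 2 ≤ A) (q : ℕ) (hq : 0 < q)
    (x : Matrix.SpecialLinearGroup (Fin 2) (ZMod q)) :
    ∃ g ∈ Subgroup.closure {g : Matrix.SpecialLinearGroup (Fin 2) ℤ |
        ∃ i j : ℕ, 1 ≤ i ∧ i ≤ A ∧ 1 ≤ j ∧ j ≤ A ∧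
          (g : Matrix (Fin 2) (Fin 2) ℤ) = M i * M j},
      Matrix.SpecialLinearGroup.map (Int.castRingHom (ZMod q)) g = x := by
  haveI : NeZero q := ⟨hq.ne'⟩
  set S : Set (Matrix.SpecialLinearGroup (Fin 2) ℤ) :=
    {g : Matrix.SpecialLinearGroup (Fin 2) ℤ |
      ∃ i j : ℕ, 1 ≤ i ∧ i ≤ A ∧ 1 ≤ j ∧ j ≤ A ∧
        (g : Matrix (Fin 2) (Fin 2) ℤ) = M i * M j} with hS
  have hwmem : ∀ i j : ℕ, 1 ≤ i → i ≤ A → 1 ≤ j → j ≤ A →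
      wsl i j ∈ Subgroup.closure S := by
    intro i j h1 h2 h3 h4
    exact Subgroup.subset_closure ⟨i, j, h1, h2, h3, h4, rfl⟩
  have hLZ : sL (1 : ℤ) ∈ Subgroup.closure S := by
    have : sL (1 : ℤ) = wsl 2 1 * (wsl 1 1)⁻¹ := by
      rw [← wsl_one_one_mul]; group
    rw [this]
    exact mul_mem (hwmem 2 1 (by omega) hA (by omega) (by omega))
      (inv_mem (hwmem 1 1 (by omega) (by omega) (by omega) (by omega)))
  have hUZ : sU (1 : ℤ) ∈ Subgroup.closure S := by
    have : sU (1 : ℤ) = (wsl 1 1)⁻¹ * wsl 1 2 := by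
      rw [← wsl_mul_one_one]; group
    rw [this]
    exact mul_mem (inv_mem (hwmem 1 1 (by omega) (by omega) (by omega) (by omega)))
      (hwmem 1 2 (by omega) (by omega) (by omega) hA)
  set φ := Matrix.SpecialLinearGroup.map (n := Fin 2) (Int.castRingHom (ZMod q)) with hφ
  set H : Subgroup (SpecialLinearGroup (Fin 2) (ZMod q)) :=
    (Subgroup.closure S).map φ with hH
  have hU : sU (1 : ZMod q) ∈ H := ⟨sU 1, hUZ, map_sU q⟩
  have hL : sL (1 : ZMod q) ∈ H := ⟨sL 1, hLZ, map_sL q⟩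
  have hx : x ∈ H := key H hU hL (x 1 0).val x rfl
  obtain ⟨g, hg, hgx⟩ := hx
  exact ⟨g, hg, hgx⟩
end
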